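/- For any degenerate simplex z in a simplicial set S, there is a unique nondegenerate simplex z' and a unique degeneracy operator σ (a surjective map of simplices) such that z = σ*(z'); consequently, for any map T → S from a necklace T, there exists a necklace T̄, a totally nondegenerate map T̄ → S, and a surjection of necklaces T → T̄ over S, unique up to isomorphism. -/

import Mathlib

open CategoryTheory Simplicial

namespace Paper

/-- The directed-edge relation on vertices of a simplicial set. -/
def edgeRel (X : SSet) (x y : X _⦋0⦌) : Prop :=
  ∃ e : X _⦋1⦌, X.δ 1 e = x ∧ X.δ 0 e = y

/-- `x ⪯ y` iff there is a finite directed path of 1-simplices from `x` to `y`. -/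
def vertPath (X : SSet) : X _⦋0⦌ → X _⦋0⦌ → Prop :=
  Relation.ReflTransGen (edgeRel X)

/-- The sequence of vertices of an `n`-simplex. -/
def vertexSeq {X : SSet} {n : ℕ} (x : X _⦋n⦌) : Fin (n + 1) → X _⦋0⦌ :=
  fun i => X.map (SimplexCategory.const (⦋0⦌ : SimplexCategory) ⦋n⦌ i).op x

/-- A simplicial set is *ordered* if the path preorder on its vertices is
antisymmetric and every simplex is determined by its sequence of vertices. -/
def Ordered (X : SSet) : Prop :=
  (∀ x y : X _⦋0⦌, vertPath X x y → vertPath X y x → x = y) ∧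
  (∀ (n : ℕ) (x y : X _⦋n⦌), vertexSeq x = vertexSeq y → x = y)

/-- A hands-on model of the standard `n`-simplex. -/
def Δstd (n : ℕ) : SSet where
  obj m := Fin (m.unop.len + 1) →o Fin (n + 1)
  map φ := TypeCat.ofHom fun f => f.comp φ.unop.toOrderHom
  map_id _ := rfl
  map_comp _ _ := rfl

/-- The condition cutting a necklace with joint set `J` out of `Δstd N`:
no joint lies strictly between the first and last vertex of the simplex. -/
def NeckCond {N : ℕ} (J : Finset (Fin (N + 1))) {m : SimplexCategoryᵒᵖ}
    (f : Fin (m.unop.len + 1) →o Fin (N + 1)) : Prop :=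
  ∀ t ∈ J, ¬ (f 0 < t ∧ t < f (Fin.last m.unop.len))

/-- The necklace with vertices `0,…,N` and joints `J` (a wedge of simplices glued
end to end; the beads span the intervals between consecutive joints). -/
def Necklace (N : ℕ) (J : Finset (Fin (N + 1))) : SSet where
  obj m := { f : Fin (m.unop.len + 1) →o Fin (N + 1) // NeckCond J f }
  map φ := TypeCat.ofHom fun f => ⟨f.1.comp φ.unop.toOrderHom, by
    intro t ht h
    exact f.2 t ht ⟨lt_of_le_of_lt (f.1.monotone (Fin.zero_le _)) h.1,
      lt_of_lt_of_le h.2 (f.1.monotone (Fin.le_last _))⟩⟩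
  map_id _ := rfl
  map_comp _ _ := rfl

/-- The vertex `v` of a necklace. -/
def vtx {N : ℕ} (J : Finset (Fin (N + 1))) (v : Fin (N + 1)) : (Necklace N J) _⦋0⦌ :=
  ⟨⟨fun _ => v, fun _ _ _ => le_rfl⟩, fun _ _ h => absurd (h.1.trans h.2) (lt_irrefl v)⟩

/-- The canonical inclusion of a necklace into the simplex on its vertices. -/
def neckIncl (N : ℕ) (J : Finset (Fin (N + 1))) : Necklace N J ⟶ Δstd N where
  app _ := TypeCat.ofHom fun f => f.1
  naturality _ _ _ := rfl

lemma eq_vtx {N : ℕ} {J : Finset (Fin (N + 1))} (x : (Necklace N J) _⦋0⦌) :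
    x = vtx J (x.1 0) := by
  refine Subtype.ext (OrderHom.ext _ _ (funext fun i => ?_))
  have : i = 0 := Subsingleton.elim (α := Fin 1) i 0
  rw [this]; rfl

/-- The map induced on vertices by a map of necklaces. -/
def nvmap {N N' : ℕ} {J : Finset (Fin (N + 1))} {J' : Finset (Fin (N' + 1))}
    (g : Necklace N J ⟶ Necklace N' J') : Fin (N + 1) → Fin (N' + 1) :=
  fun v => (g.app (Opposite.op (⦋0⦌ : SimplexCategory)) (vtx J v)).1 0

lemma app_vtx {N N' : ℕ} {J : Finset (Fin (N + 1))} {J' : Finset (Fin (N' + 1))}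
    (g : Necklace N J ⟶ Necklace N' J') (v : Fin (N + 1)) :
    g.app (Opposite.op (⦋0⦌ : SimplexCategory)) (vtx J v) = vtx J' (nvmap g v) :=
  eq_vtx _

lemma nvmap_comp {N N' N'' : ℕ} {J : Finset (Fin (N + 1))} {J' : Finset (Fin (N' + 1))}
    {J'' : Finset (Fin (N'' + 1))} (g : Necklace N J ⟶ Necklace N' J')
    (h : Necklace N' J' ⟶ Necklace N'' J'') :
    nvmap (g ≫ h) = nvmap h ∘ nvmap g := by
  funext v
  show (h.app _ (g.app _ (vtx J v))).1 0 = _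
  rw [app_vtx g v]
  rfl

/-- A map of simplicial sets is a *simple inclusion* if it has the right lifting
property with respect to the endpoint inclusions `∂Δ¹ ↪ T` for every necklace `T`. -/
def IsSimpleInclusion {A X : SSet} (i : A ⟶ X) : Prop :=
  ∀ (N : ℕ) (J : Finset (Fin (N + 1))), (0 : Fin (N + 1)) ∈ J → Fin.last N ∈ J →
    ∀ (v : Necklace N J ⟶ X) (a b : A _⦋0⦌),
      i.app _ a = v.app _ (vtx J 0) → i.app _ b = v.app _ (vtx J (Fin.last N)) →
      ∃ l : Necklace N J ⟶ A, l ≫ i = v ∧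
        l.app _ (vtx J 0) = a ∧ l.app _ (vtx J (Fin.last N)) = b

def Pstd (m : ℕ) (n : Fin m → ℕ) : SSet where
  obj k := ∀ i : Fin m, Fin (k.unop.len + 1) →o Fin (n i + 1)
  map φ := TypeCat.ofHom fun f => fun i => (f i).comp φ.unop.toOrderHom
  map_id _ := rfl
  map_comp _ _ := rfl

/-- A simplex of a simplicial set is nondegenerate if it is not the image of a
lower-dimensional simplex under a degeneracy operator. -/
def IsNondeg {X : SSet} {n : ℕ} (x : X _⦋n⦌) : Prop :=
  ∀ (m : ℕ) (σ : (⦋n⦌ : SimplexCategory) ⟶ ⦋m⦌) (y : X _⦋m⦌),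
    Function.Surjective σ.toOrderHom → x = X.map σ.op y → n ≤ m

/-- A simplex is degenerate if it is the image of a  strictly lower-dimensional
simplex under a (surjective) degeneracy operator. -/
def IsDegenerate {X : SSet} {n : ℕ} (x : X _⦋n⦌) : Prop :=
  ∃ (m : ℕ) (σ : (⦋n⦌ : SimplexCategory) ⟶ ⦋m⦌) (y : X _⦋m⦌),
    m < n ∧ Function.Surjective σ.toOrderHom ∧ x = X.map σ.op y


/-- The bead of a necklace spanning two consecutive joints `j ≤ j'`. -/
def bead {N : ℕ} (J : Finset (Fin (N + 1))) (j j' : Fin (N + 1)) (hle : j ≤ j')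
    (hcons : ∀ t ∈ J, ¬ (j < t ∧ t < j')) :
    (Necklace N J) _⦋j'.val - j.val⦌ :=
  ⟨⟨fun k => ⟨j.val + k.val, by
        have hk := k.isLt
        simp only [Opposite.unop_op, SimplexCategory.len_mk] at hk
        have := j'.isLt; omega⟩,
      fun k k' h => by
        simp only [Fin.mk_le_mk]
        exact Nat.add_le_add_left h j.val⟩,
    by
      intro t ht h
      refine hcons t ht ⟨?_, ?_⟩
      · have h1 : j.val + 0 < t.val := h.1
        simp only [Fin.lt_def, OrderHom.coe_mk, Fin.val_zero] at h1 ⊢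
        omega
      · have h2 : t.val < j.val + (j'.val - j.val) := h.2
        have hle' : j.val ≤ j'.val := hle
        simp only [Fin.lt_def, OrderHom.coe_mk, Fin.val_last, Opposite.unop_op,
          SimplexCategory.len_mk] at h2 ⊢
        omega⟩

/-- A map from a necklace is totally nondegenerate if it sends each bead to a
nondegenerate simplex. -/
def TotallyNondeg {N : ℕ} {J : Finset (Fin (N + 1))} {S : SSet}
    (f : Necklace N J ⟶ S) : Prop :=
  ∀ (j j' : Fin (N + 1)), j ∈ J → j' ∈ J → ∀ (hlt : j < j')
    (hcons : ∀ t ∈ J, ¬ (j < t ∧ t < j')),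
    IsNondeg (f.app _ (bead J j j' hlt.le hcons))

/-- A levelwise surjection of simplicial sets. -/
def LevelSurj {X Y : SSet} (f : X ⟶ Y) : Prop :=
  ∀ m, Function.Surjective (f.app m)

/-- The category of necklaces over `S` with endpoints `a` and `b`. -/
structure NecOver (S : SSet) (a b : S _⦋0⦌) where
  N : ℕ
  J : Finset (Fin (N + 1))
  h0 : (0 : Fin (N + 1)) ∈ J
  hN : Fin.last N ∈ J
  f : Necklace N J ⟶ S
  ha : f.app _ (vtx J 0) = a
  hb : f.app _ (vtx J (Fin.last N)) = b

instance (S : SSet) (a b : S _⦋0⦌) : Category (NecOver S a b) where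
  Hom t u := { g : Necklace t.N t.J ⟶ Necklace u.N u.J //
    g ≫ u.f = t.f ∧ g.app _ (vtx t.J 0) = vtx u.J 0 ∧
    g.app _ (vtx t.J (Fin.last t.N)) = vtx u.J (Fin.last u.N) }
  id t := ⟨𝟙 _, Category.id_comp _, rfl, rfl⟩
  comp {t u v} g h := ⟨g.1 ≫ h.1, by rw [Category.assoc, h.2.1, g.2.1],
    by show h.1.app _ (g.1.app _ _) = _; rw [g.2.2.1, h.2.2.1],
    by show h.1.app _ (g.1.app _ _) = _; rw [g.2.2.2, h.2.2.2]⟩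
  id_comp g := Subtype.ext (Category.id_comp _)
  comp_id g := Subtype.ext (Category.comp_id _)
  assoc f g h := Subtype.ext (Category.assoc _ _ _)


/-- Flagged necklaces over `S` with endpoints `a, b` and flags of length `n`. -/
structure FlaggedNec (S : SSet) (a b : S _⦋0⦌) (n : ℕ) where
  N : ℕ
  J : Finset (Fin (N + 1))
  h0 : (0 : Fin (N + 1)) ∈ J
  hN : Fin.last N ∈ J
  f : Necklace N J ⟶ S
  ha : f.app _ (vtx J 0) = a
  hb : f.app _ (vtx J (Fin.last N)) = b
  flag : Fin (n + 1) → Finset (Fin (N + 1))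
  flag_mono : Monotone flag
  flag_joints : J ⊆ flag 0

instance (S : SSet) (a b : S _⦋0⦌) (n : ℕ) : Category (FlaggedNec S a b n) where
  Hom t u := { g : Necklace t.N t.J ⟶ Necklace u.N u.J //
    g ≫ u.f = t.f ∧ g.app _ (vtx t.J 0) = vtx u.J 0 ∧
    g.app _ (vtx t.J (Fin.last t.N)) = vtx u.J (Fin.last u.N) ∧
    ∀ i, (t.flag i).image (nvmap g) = u.flag i }
  id t := ⟨𝟙 _, Category.id_comp _, rfl, rfl, fun i => by
    have : nvmap (𝟙 (Necklace t.N t.J)) = id := rfl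
    rw [this, Finset.image_id]⟩
  comp {t u v} g h := ⟨g.1 ≫ h.1, by rw [Category.assoc, h.2.1, g.2.1],
    by show h.1.app _ (g.1.app _ _) = _; rw [g.2.2.1, h.2.2.1],
    by show h.1.app _ (g.1.app _ _) = _; rw [g.2.2.2.1, h.2.2.2.1],
    fun i => by
      rw [nvmap_comp, ← Finset.image_image, g.2.2.2.2 i, h.2.2.2.2 i]⟩
  id_comp g := Subtype.ext (Category.id_comp _)
  comp_id g := Subtype.ext (Category.comp_id _)
  assoc f g h := Subtype.ext (Category.assoc _ _ _)




section mono

variable {n m k : ℕ}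

lemma surj_zero (u : Fin (n+1) →o Fin (m+1)) (hu : Function.Surjective u) : u 0 = 0 := by
  obtain ⟨x, hx⟩ := hu 0
  exact le_antisymm (hx ▸ u.monotone (Fin.zero_le x)) (Fin.zero_le _)

lemma surj_last (u : Fin (n+1) →o Fin (m+1)) (hu : Function.Surjective u) :
    u (Fin.last n) = Fin.last m := by
  obtain ⟨x, hx⟩ := hu (Fin.last m)
  exact le_antisymm (Fin.le_last _) (hx ▸ u.monotone (Fin.le_last x))

lemma surj_step (u : Fin (n+1) →o Fin (m+1)) (hu : Function.Surjective u) (i : Fin n) :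
    (u i.succ).val ≤ (u i.castSucc).val + 1 := by
  by_contra h
  push_neg at h
  have hlt : (u i.castSucc).val + 1 < m + 1 := lt_of_le_of_lt (by omega) (u i.succ).isLt
  obtain ⟨x, hx⟩ := hu ⟨(u i.castSucc).val + 1, hlt⟩
  rcases le_or_gt x i.castSucc with hle | hltx
  · have := u.monotone hle
    rw [hx] at this
    simp [Fin.le_def] at this
  · have : i.succ ≤ x := by
      rw [Fin.le_def, Fin.val_succ]
      exact hltx
    have := u.monotone this
    rw [hx] at this
    simp [Fin.le_def] at this
    omega

/-- minimal section of a surjective monotone map -/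
noncomputable def minSec (u : Fin (n+1) →o Fin (m+1)) (hu : Function.Surjective u) :
    Fin (m+1) →o Fin (n+1) where
  toFun i := Finset.min' (Finset.univ.filter (fun x => u x = i))
    ⟨(hu i).choose, by simp [(hu i).choose_spec]⟩
  monotone' := by
    intro i j hij
    set si := Finset.min' (Finset.univ.filter (fun x => u x = i))
      ⟨(hu i).choose, by simp [(hu i).choose_spec]⟩ with hsi
    set sj := Finset.min' (Finset.univ.filter (fun x => u x = j))
      ⟨(hu j).choose, by simp [(hu j).choose_spec]⟩ with hsj
    by_contra h
    push_neg at h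
    have hmi : si ∈ Finset.univ.filter (fun x => u x = i) := Finset.min'_mem _ _
    have hmj : sj ∈ Finset.univ.filter (fun x => u x = j) := Finset.min'_mem _ _
    simp only [Finset.mem_filter, Finset.mem_univ, true_and] at hmi hmj
    have h1 := u.monotone h.le
    rw [hmi, hmj] at h1
    have : i = j := le_antisymm hij h1
    subst this
    exact absurd (Finset.min'_le _ _ (by simp only [Finset.mem_filter, Finset.mem_univ, true_and]; exact hmj)) (not_le.2 h)

lemma minSec_spec (u : Fin (n+1) →o Fin (m+1)) (hu : Function.Surjective u) (i : Fin (m+1)) :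
    u (minSec u hu i) = i := by
  have := Finset.min'_mem (Finset.univ.filter (fun x => u x = i))
    ⟨(hu i).choose, by simp [(hu i).choose_spec]⟩
  simp only [Finset.mem_filter, Finset.mem_univ, true_and] at this; exact this

lemma minSec_le (u : Fin (n+1) →o Fin (m+1)) (hu : Function.Surjective u) (x : Fin (n+1)) :
    minSec u hu (u x) ≤ x :=
  Finset.min'_le _ _ (by simp)

noncomputable def maxSec (u : Fin (n+1) →o Fin (m+1)) (hu : Function.Surjective u) :
    Fin (m+1) →o Fin (n+1) where
  toFun i := Finset.max' (Finset.univ.filter (fun x => u x = i))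
    ⟨(hu i).choose, by simp [(hu i).choose_spec]⟩
  monotone' := by
    intro i j hij
    by_contra h
    push_neg at h
    have hmi := Finset.max'_mem (Finset.univ.filter (fun x => u x = i))
      ⟨(hu i).choose, by simp [(hu i).choose_spec]⟩
    have hmj := Finset.max'_mem (Finset.univ.filter (fun x => u x = j))
      ⟨(hu j).choose, by simp [(hu j).choose_spec]⟩
    simp only [Finset.mem_filter, Finset.mem_univ, true_and] at hmi hmj
    have h1 := u.monotone h.le
    rw [hmi, hmj] at h1
    have : i = j := le_antisymm hij h1
    subst this
    exact absurd (Finset.le_max' _ _ (by simp [hmj])) (not_le.2 h)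

lemma maxSec_spec (u : Fin (n+1) →o Fin (m+1)) (hu : Function.Surjective u) (i : Fin (m+1)) :
    u (maxSec u hu i) = i := by
  have := Finset.max'_mem (Finset.univ.filter (fun x => u x = i))
    ⟨(hu i).choose, by simp [(hu i).choose_spec]⟩
  simp only [Finset.mem_filter, Finset.mem_univ, true_and] at this; exact this

lemma le_maxSec (u : Fin (n+1) →o Fin (m+1)) (hu : Function.Surjective u) (x : Fin (n+1)) :
    x ≤ maxSec u hu (u x) :=
  Finset.le_max' _ _ (by simp)

lemma mono_surj_id (u : Fin (n+1) →o Fin (n+1)) (hu : Function.Surjective u) (x : Fin (n+1)) :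
    u x = x := by
  have hinj : Function.Injective u := Finite.injective_iff_surjective.2 hu
  have hsm : StrictMono u := u.monotone.strictMono_of_injective hinj
  have key : ∀ (f : Fin (n+1) → Fin (n+1)), StrictMono f → ∀ y : Fin (n+1), y ≤ f y := by
    intro f hf y
    induction y using Fin.induction with
    | zero => exact Fin.zero_le _
    | succ i ih =>
      have h1 : f i.castSucc < f i.succ := hf (Fin.castSucc_lt_succ (i := i))
      have h2 := ih.trans_lt h1
      rw [Fin.le_def, Fin.val_succ]
      rw [Fin.lt_def] at h2
      simp only [Fin.coe_castSucc] at h2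
      omega
  set e := Equiv.ofBijective u ⟨hinj, hu⟩ with he
  have hgs : StrictMono e.symm := by
    intro a b hab
    by_contra hle
    push_neg at hle
    have := u.monotone (hle : e.symm b ≤ e.symm a)
    have ha : u (e.symm a) = a := e.apply_symm_apply a
    have hb : u (e.symm b) = b := e.apply_symm_apply b
    rw [ha, hb] at this
    exact absurd hab (not_lt.2 this)
  have h1 : x ≤ u x := key u hsm x
  have h2 : u x ≤ x := by
    have := key e.symm hgs (u x)
    have hx : e.symm (u x) = x := e.symm_apply_apply x
    rwa [hx] at this
  exact le_antisymm h2 h1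

lemma mono_inj_id (u : Fin (n+1) →o Fin (n+1)) (hu : Function.Injective u) (x : Fin (n+1)) :
    u x = x :=
  mono_surj_id u (Finite.surjective_of_injective hu) x

end mono

section factor

/-- Epi-mono factorization of a morphism in SimplexCategory, by hand. -/
lemma exists_factor {n k : ℕ} (φ : (⦋n⦌ : SimplexCategory) ⟶ ⦋k⦌) :
    ∃ (c : ℕ) (e : (⦋n⦌ : SimplexCategory) ⟶ ⦋c⦌) (i : (⦋c⦌ : SimplexCategory) ⟶ ⦋k⦌),
      c ≤ k ∧ Function.Surjective e.toOrderHom ∧ Function.Injective i.toOrderHom ∧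
      φ = e ≫ i := by
  classical
  set T : Finset (Fin (k+1)) := Finset.image (φ.toOrderHom) Finset.univ with hT
  have hne : T.Nonempty := ⟨φ.toOrderHom 0, by simp [hT]⟩
  obtain ⟨c, hc⟩ : ∃ c, T.card = c + 1 := ⟨T.card - 1, by
    have := Finset.card_pos.2 hne; omega⟩
  set oiso := T.orderIsoOfFin hc with hoiso
  have hmem : ∀ x, φ.toOrderHom x ∈ T := fun x => by simp [hT]
  refine ⟨c, SimplexCategory.mkHom ⟨fun x => oiso.symm ⟨φ.toOrderHom x, hmem x⟩, ?_⟩,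
    SimplexCategory.mkHom ⟨fun y => (oiso y).1, ?_⟩, ?_, ?_, ?_, ?_⟩
  · intro a b hab
    exact oiso.symm.monotone (Subtype.mk_le_mk.2 (φ.toOrderHom.monotone hab))
  · intro a b hab
    exact Subtype.coe_le_coe.2 (oiso.le_iff_le.2 hab)
  · have hle : T.card ≤ k + 1 := by simpa using Finset.card_le_univ T
    omega
  · intro y
    have hy : ((oiso y : T) : Fin (k+1)) ∈ T := (oiso y).2
    obtain ⟨x, -, hx⟩ := Finset.mem_image.1 hy
    refine ⟨x, ?_⟩
    show oiso.symm ⟨φ.toOrderHom x, hmem x⟩ = y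
    have h2 : oiso.symm ⟨φ.toOrderHom x, hmem x⟩ = oiso.symm (oiso y) :=
      congrArg oiso.symm (Subtype.ext hx)
    rwa [OrderIso.symm_apply_apply] at h2
  · intro a b hab
    have hab' : ((oiso a : T) : Fin (k+1)) = (oiso b : T) := hab
    exact oiso.injective (Subtype.ext hab')
  · apply SimplexCategory.Hom.ext
    apply OrderHom.ext
    funext x
    show φ.toOrderHom x = _
    show _ = ((oiso (oiso.symm ⟨φ.toOrderHom x, hmem x⟩) : T) : Fin (k+1))
    exact (congrArg Subtype.val (oiso.apply_symm_apply ⟨φ.toOrderHom x, hmem x⟩)).symm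

end factor


section ez

variable {X : SSet}

lemma comp_surj {a b c : ℕ} {f : (⦋a⦌ : SimplexCategory) ⟶ ⦋b⦌} {g : (⦋b⦌ : SimplexCategory) ⟶ ⦋c⦌}
    (hf : Function.Surjective f.toOrderHom) (hg : Function.Surjective g.toOrderHom) :
    Function.Surjective (f ≫ g).toOrderHom := by
  rw [SimplexCategory.comp_toOrderHom]
  exact hg.comp hf

lemma id_surj {a : ℕ} :
    Function.Surjective (SimplexCategory.Hom.toOrderHom (𝟙 (⦋a⦌ : SimplexCategory))) := by
  rw [SimplexCategory.id_toOrderHom]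
  exact Function.surjective_id

lemma map_id_apply {a : ℕ} (x : X _⦋a⦌) : X.map (𝟙 (⦋a⦌ : SimplexCategory)).op x = x := by
  rw [CategoryTheory.op_id]
  exact FunctorToTypes.map_id_apply X x

lemma map_map {a b c : ℕ} (f : (⦋a⦌ : SimplexCategory) ⟶ ⦋b⦌) (g : (⦋b⦌ : SimplexCategory) ⟶ ⦋c⦌)
    (x : X _⦋c⦌) : X.map f.op (X.map g.op x) = X.map (f ≫ g).op x := by
  rw [CategoryTheory.op_comp, X.map_comp]
  rfl

lemma nondeg_le {m k : ℕ} (z : X _⦋m⦌) (hz : IsNondeg z) (φ : (⦋m⦌ : SimplexCategory) ⟶ ⦋k⦌)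
    (w : X _⦋k⦌) (h : z = X.map φ.op w) : m ≤ k := by
  obtain ⟨c, e, i, hck, he, -, rfl⟩ := exists_factor φ
  rw [← map_map] at h
  exact (hz c e _ he h).trans hck

lemma nondeg_endo {m : ℕ} (z : X _⦋m⦌) (hz : IsNondeg z) (ψ : (⦋m⦌ : SimplexCategory) ⟶ ⦋m⦌)
    (w : X _⦋m⦌) (h : z = X.map ψ.op w) : ψ = 𝟙 _ ∧ z = w := by
  obtain ⟨c, e, i, hck, he, hi, rfl⟩ := exists_factor ψ
  rw [← map_map] at h
  have hmc : m ≤ c := hz c e _ he h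
  obtain rfl : c = m := le_antisymm hck hmc
  have hi' : i = 𝟙 _ := by
    apply SimplexCategory.Hom.ext; apply OrderHom.ext; funext x
    rw [SimplexCategory.id_toOrderHom]
    exact mono_inj_id i.toOrderHom hi x
  have he' : e = 𝟙 _ := by
    apply SimplexCategory.Hom.ext; apply OrderHom.ext; funext x
    rw [SimplexCategory.id_toOrderHom]
    exact mono_surj_id e.toOrderHom he x
  subst hi' he'
  refine ⟨by simp, ?_⟩
  rw [h, map_id_apply, map_id_apply]

lemma ez_exists : ∀ (n : ℕ) (x : X _⦋n⦌),
    ∃ (m : ℕ) (σ : (⦋n⦌ : SimplexCategory) ⟶ ⦋m⦌) (z : X _⦋m⦌),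
      Function.Surjective σ.toOrderHom ∧ IsNondeg z ∧ x = X.map σ.op z := by
  intro n
  induction n using Nat.strong_induction_on with
  | _ n IH =>
    intro x
    by_cases hx : IsNondeg x
    · refine ⟨n, 𝟙 _, x, id_surj, hx, ?_⟩
      rw [CategoryTheory.op_id, X.map_id]; rfl
    · rw [IsNondeg] at hx
      push_neg at hx
      obtain ⟨m, σ, y, hsurj, hxy, hmn⟩ := hx
      obtain ⟨m', τ, z, hτ, hz, hyz⟩ := IH m hmn y
      exact ⟨m', σ ≫ τ, z, comp_surj hsurj hτ, hz, by rw [hxy, hyz, map_map]⟩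

lemma sec_comp {n m : ℕ} (σ : (⦋n⦌ : SimplexCategory) ⟶ ⦋m⦌)
    (hσ : Function.Surjective σ.toOrderHom) :
    SimplexCategory.mkHom (minSec σ.toOrderHom hσ) ≫ σ = 𝟙 _ ∧
    SimplexCategory.mkHom (maxSec σ.toOrderHom hσ) ≫ σ = 𝟙 _ := by
  constructor <;>
  · apply SimplexCategory.Hom.ext; apply OrderHom.ext; funext x
    rw [SimplexCategory.comp_toOrderHom, SimplexCategory.id_toOrderHom]
    simp only [OrderHom.comp_coe, Function.comp_apply, OrderHom.id_coe, id_eq]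
    first
      | exact minSec_spec σ.toOrderHom hσ x
      | exact maxSec_spec σ.toOrderHom hσ x

lemma ez_unique {n m m₂ : ℕ} (σ : (⦋n⦌ : SimplexCategory) ⟶ ⦋m⦌)
    (σ₂ : (⦋n⦌ : SimplexCategory) ⟶ ⦋m₂⦌) (z : X _⦋m⦌) (z₂ : X _⦋m₂⦌)
    (hσ : Function.Surjective σ.toOrderHom) (hσ₂ : Function.Surjective σ₂.toOrderHom)
    (hz : IsNondeg z) (hz₂ : IsNondeg z₂)
    (h : X.map σ.op z = X.map σ₂.op z₂) :
    m₂ = m ∧ HEq σ₂ σ ∧ HEq z₂ z := by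
  -- z is obtained from z₂ along any section of σ
  have hkey : ∀ (δ : (⦋m⦌ : SimplexCategory) ⟶ ⦋n⦌), δ ≫ σ = 𝟙 _ →
      z = X.map (δ ≫ σ₂).op z₂ := by
    intro δ hδ
    have : z = X.map δ.op (X.map σ.op z) := by
      rw [map_map, hδ, map_id_apply]
    rw [h, map_map] at this
    exact this
  have hkey₂ : ∀ (δ : (⦋m₂⦌ : SimplexCategory) ⟶ ⦋n⦌), δ ≫ σ₂ = 𝟙 _ →
      z₂ = X.map (δ ≫ σ).op z := by
    intro δ hδ
    have : z₂ = X.map δ.op (X.map σ₂.op z₂) := by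
      rw [map_map, hδ, map_id_apply]
    rw [← h, map_map] at this
    exact this
  obtain ⟨hsmin, hsmax⟩ := sec_comp σ hσ
  obtain ⟨hsmin₂, -⟩ := sec_comp σ₂ hσ₂
  have h1 : m ≤ m₂ := nondeg_le z hz _ z₂ (hkey _ hsmin)
  have h2 : m₂ ≤ m := nondeg_le z₂ hz₂ _ z (hkey₂ _ hsmin₂)
  obtain rfl : m₂ = m := le_antisymm h2 h1
  have hmin := nondeg_endo z hz _ z₂ (hkey _ hsmin)
  have hmax := nondeg_endo z hz _ z₂ (hkey _ hsmax)
  refine ⟨rfl, heq_of_eq ?_, heq_of_eq hmin.2.symm⟩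
  apply SimplexCategory.Hom.ext; apply OrderHom.ext; funext j
  have e1 : σ₂.toOrderHom (minSec σ.toOrderHom hσ (σ.toOrderHom j)) = σ.toOrderHom j := by
    have := congrArg (fun φ => SimplexCategory.Hom.toOrderHom φ (σ.toOrderHom j)) hmin.1
    simpa [SimplexCategory.comp_toOrderHom, SimplexCategory.id_toOrderHom] using this
  have e2 : σ₂.toOrderHom (maxSec σ.toOrderHom hσ (σ.toOrderHom j)) = σ.toOrderHom j := by
    have := congrArg (fun φ => SimplexCategory.Hom.toOrderHom φ (σ.toOrderHom j)) hmax.1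
    simpa [SimplexCategory.comp_toOrderHom, SimplexCategory.id_toOrderHom] using this
  have l1 : σ₂.toOrderHom (minSec σ.toOrderHom hσ (σ.toOrderHom j)) ≤ σ₂.toOrderHom j :=
    σ₂.toOrderHom.monotone (minSec_le σ.toOrderHom hσ j)
  have l2 : σ₂.toOrderHom j ≤ σ₂.toOrderHom (maxSec σ.toOrderHom hσ (σ.toOrderHom j)) :=
    σ₂.toOrderHom.monotone (le_maxSec σ.toOrderHom hσ j)
  rw [e1] at l1
  rw [e2] at l2
  exact le_antisymm l2 l1

end ez

section neckgeneric

variable {S : SSet} {N N' : ℕ} {J : Finset (Fin (N + 1))} {J' : Finset (Fin (N' + 1))}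

lemma vtx_inj {v w : Fin (N+1)} (h : vtx J v = vtx J w) : v = w := by
  have := congrArg (fun z => z.1 0) h
  exact this

lemma napp_apply (g : Necklace N J ⟶ Necklace N' J') {m : SimplexCategoryᵒᵖ}
    (x : (Necklace N J).obj m) (i : Fin (m.unop.len + 1)) :
    ((g.app m x).1 : Fin (m.unop.len + 1) →o Fin (N' + 1)) i = nvmap g (x.1 i) := by
  have hnat := ConcreteCategory.congr_hom (g.naturality ((SimplexCategory.const ⦋0⦌ m.unop i).op)) x
  dsimp only [types_comp_apply] at hnat
  -- LHS : g.app (op [0]) ((Necklace N J).map _ x)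
  have hx : (Necklace N J).map ((SimplexCategory.const ⦋0⦌ m.unop i).op) x = vtx J (x.1 i) := by
    apply Subtype.ext
    apply OrderHom.ext
    funext k
    have hk : k = 0 := Subsingleton.elim (α := Fin 1) k 0
    subst hk
    rfl
  have hy : (Necklace N' J').map ((SimplexCategory.const ⦋0⦌ m.unop i).op) (g.app m x) =
      vtx J' ((g.app m x).1 i) := by
    apply Subtype.ext
    apply OrderHom.ext
    funext k
    have hk : k = 0 := Subsingleton.elim (α := Fin 1) k 0
    subst hk
    rfl
  rw [hx, hy, app_vtx] at hnat
  exact (vtx_inj hnat.symm)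

/-- Necklace maps built from vertex maps. -/
def mapOfVtx (φ : Fin (N+1) →o Fin (N'+1))
    (hφ : ∀ v w : Fin (N+1), v ≤ w → (∀ t ∈ J, ¬(v < t ∧ t < w)) →
      ∀ t' ∈ J', ¬(φ v < t' ∧ t' < φ w)) : Necklace N J ⟶ Necklace N' J' where
  app m := TypeCat.ofHom fun x => ⟨φ.comp x.1, by
    intro t' ht' h
    exact hφ (x.1 0) (x.1 (Fin.last m.unop.len)) (x.1.monotone (Fin.zero_le _)) x.2 t' ht' h⟩
  naturality _ _ _ := rfl

lemma mapOfVtx_app (φ : Fin (N+1) →o Fin (N'+1))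
    (hφ : ∀ v w : Fin (N+1), v ≤ w → (∀ t ∈ J, ¬(v < t ∧ t < w)) →
      ∀ t' ∈ J', ¬(φ v < t' ∧ t' < φ w)) {m : SimplexCategoryᵒᵖ}
    (x : (Necklace N J).obj m) :
    (((mapOfVtx φ hφ).app m x).1 : Fin (m.unop.len + 1) →o Fin (N' + 1)) = φ.comp x.1 := rfl

lemma nvmap_mapOfVtx (φ : Fin (N+1) →o Fin (N'+1))
    (hφ : ∀ v w : Fin (N+1), v ≤ w → (∀ t ∈ J, ¬(v < t ∧ t < w)) →
      ∀ t' ∈ J', ¬(φ v < t' ∧ t' < φ w)) (v : Fin (N+1)) :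
    nvmap (mapOfVtx φ hφ) v = φ v := rfl

/-- Spans: pairs of joints with nothing strictly between. -/
def IsSpan (J : Finset (Fin (N + 1))) (j j' : Fin (N + 1)) : Prop :=
  j ∈ J ∧ j' ∈ J ∧ j ≤ j' ∧ ∀ t ∈ J, ¬(j < t ∧ t < j')

def jb (h0 : (0 : Fin (N+1)) ∈ J) (v : Fin (N+1)) : Fin (N+1) :=
  (J.filter (· ≤ v)).max' ⟨0, by simp [h0, Fin.zero_le]⟩

def ja (hN : Fin.last N ∈ J) (v : Fin (N+1)) : Fin (N+1) :=
  (J.filter (v ≤ ·)).min' ⟨Fin.last N, by simp [hN, Fin.le_last]⟩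

lemma jb_mem (h0 : (0 : Fin (N+1)) ∈ J) (v : Fin (N+1)) : jb h0 v ∈ J := by
  have := Finset.max'_mem (J.filter (· ≤ v)) ⟨0, by simp [h0, Fin.zero_le]⟩
  simp only [Finset.mem_filter] at this
  exact this.1

lemma jb_le (h0 : (0 : Fin (N+1)) ∈ J) (v : Fin (N+1)) : jb h0 v ≤ v := by
  have := Finset.max'_mem (J.filter (· ≤ v)) ⟨0, by simp [h0, Fin.zero_le]⟩
  simp only [Finset.mem_filter] at this
  exact this.2

lemma le_jb (h0 : (0 : Fin (N+1)) ∈ J) {v t : Fin (N+1)} (ht : t ∈ J) (htv : t ≤ v) :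
    t ≤ jb h0 v :=
  Finset.le_max' _ _ (by simp [ht, htv])

lemma ja_mem (hN : Fin.last N ∈ J) (v : Fin (N+1)) : ja hN v ∈ J := by
  have := Finset.min'_mem (J.filter (v ≤ ·)) ⟨Fin.last N, by simp [hN, Fin.le_last]⟩
  simp only [Finset.mem_filter] at this
  exact this.1

lemma le_ja (hN : Fin.last N ∈ J) (v : Fin (N+1)) : v ≤ ja hN v := by
  have := Finset.min'_mem (J.filter (v ≤ ·)) ⟨Fin.last N, by simp [hN, Fin.le_last]⟩
  simp only [Finset.mem_filter] at this
  exact this.2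

lemma ja_le (hN : Fin.last N ∈ J) {v t : Fin (N+1)} (ht : t ∈ J) (htv : v ≤ t) :
    ja hN v ≤ t :=
  Finset.min'_le _ _ (by simp [ht, htv])

lemma span_of (h0 : (0 : Fin (N+1)) ∈ J) (hN : Fin.last N ∈ J) {v w : Fin (N+1)}
    (hvw : v ≤ w) (hno : ∀ t ∈ J, ¬(v < t ∧ t < w)) :
    IsSpan J (jb h0 v) (ja hN w) := by
  refine ⟨jb_mem h0 v, ja_mem hN w, (jb_le h0 v).trans (hvw.trans (le_ja hN w)), ?_⟩
  intro t ht ⟨hl, hr⟩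
  rcases le_or_gt t v with h1 | h1
  · exact absurd (le_jb h0 ht h1) (not_le.2 hl)
  rcases le_or_gt w t with h2 | h2
  · exact absurd (ja_le hN ht h2) (not_le.2 hr)
  exact hno t ht ⟨h1, h2⟩

end neckgeneric


section necklacemain

variable {S : SSet} {N : ℕ} {J : Finset (Fin (N + 1))}

/-- The morphism collapsing a simplex into a containing bead. -/
def relHom {m : SimplexCategoryᵒᵖ} (a : (Necklace N J).obj m) (j j' : Fin (N+1))
    (hj : j ≤ a.1 0) (hj' : a.1 (Fin.last m.unop.len) ≤ j') :
    m.unop ⟶ (⦋j'.val - j.val⦌ : SimplexCategory) :=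
  SimplexCategory.Hom.mk ⟨fun i => ⟨(a.1 i).val - j.val, by
    have h1 : (a.1 i).val ≤ (a.1 (Fin.last m.unop.len)).val := a.1.monotone (Fin.le_last i)
    have h2 : (a.1 (Fin.last m.unop.len)).val ≤ j'.val := hj'
    simp only [SimplexCategory.len_mk]
    omega⟩, fun i i' h => by
    simp only [Fin.mk_le_mk]
    exact Nat.sub_le_sub_right (a.1.monotone h) _⟩

lemma bead_formula (F : Necklace N J ⟶ S) {m : SimplexCategoryᵒᵖ}
    (a : (Necklace N J).obj m) (j j' : Fin (N+1)) (hsp : IsSpan J j j')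
    (hj : j ≤ a.1 0) (hj' : a.1 (Fin.last m.unop.len) ≤ j') :
    F.app m a =
      S.map (relHom a j j' hj hj').op (F.app _ (bead J j j' hsp.2.2.1 hsp.2.2.2)) := by
  have ha : (Necklace N J).map (relHom a j j' hj hj').op
      (bead J j j' hsp.2.2.1 hsp.2.2.2) = a := by
    apply Subtype.ext
    apply OrderHom.ext
    funext i
    apply Fin.ext
    show j.val + ((a.1 i).val - j.val) = (a.1 i).val
    have h3 : j.val ≤ (a.1 i).val := Fin.le_def.1 (le_trans hj (a.1.monotone (Fin.zero_le i)))
    omega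
  conv_lhs => rw [← ha]
  exact ConcreteCategory.congr_hom (F.naturality (relHom a j j' hj hj').op) _

/-- Chosen Eilenberg–Zilber data. -/
noncomputable def ezd {d : ℕ} (x : S _⦋d⦌) :
    Σ' (m : ℕ) (σ : (⦋d⦌ : SimplexCategory) ⟶ ⦋m⦌) (z : S _⦋m⦌),
      Function.Surjective σ.toOrderHom ∧ IsNondeg z ∧ x = S.map σ.op z :=
  ⟨(ez_exists d x).choose, (ez_exists d x).choose_spec.choose,
    (ez_exists d x).choose_spec.choose_spec.choose,
    (ez_exists d x).choose_spec.choose_spec.choose_spec⟩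

open Classical in
/-- The simplex of `S` spanned by a bead. -/
noncomputable def xsp (f : Necklace N J ⟶ S) (j j' : Fin (N+1)) : S _⦋j'.val - j.val⦌ :=
  if h : IsSpan J j j' then f.app _ (bead J j j' h.2.2.1 h.2.2.2)
  else S.map (SimplexCategory.const ⦋j'.val - j.val⦌ ⦋0⦌ 0).op (f.app _ (vtx J 0))

lemma xsp_of_span (f : Necklace N J ⟶ S) {j j' : Fin (N+1)} (h : IsSpan J j j') :
    xsp f j j' = f.app _ (bead J j j' h.2.2.1 h.2.2.2) := dif_pos h

noncomputable def msp (f : Necklace N J ⟶ S) (j j' : Fin (N+1)) : ℕ := (ezd (xsp f j j')).1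

noncomputable def ssp (f : Necklace N J ⟶ S) (j j' : Fin (N+1)) :
    (⦋j'.val - j.val⦌ : SimplexCategory) ⟶ ⦋msp f j j'⦌ := (ezd (xsp f j j')).2.1

noncomputable def zsp (f : Necklace N J ⟶ S) (j j' : Fin (N+1)) : S _⦋msp f j j'⦌ :=
  (ezd (xsp f j j')).2.2.1

lemma ssp_surj (f : Necklace N J ⟶ S) (j j' : Fin (N+1)) :
    Function.Surjective (ssp f j j').toOrderHom := (ezd (xsp f j j')).2.2.2.1

lemma zsp_nondeg (f : Necklace N J ⟶ S) (j j' : Fin (N+1)) :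
    IsNondeg (zsp f j j') := (ezd (xsp f j j')).2.2.2.2.1

lemma xsp_eq (f : Necklace N J ⟶ S) (j j' : Fin (N+1)) :
    xsp f j j' = S.map (ssp f j j').op (zsp f j j') := (ezd (xsp f j j')).2.2.2.2.2

/-- value of the EZ epimorphism of a bead, as a (clamped) function on ℕ. -/
noncomputable def sv (f : Necklace N J ⟶ S) (j j' : Fin (N+1)) (r : ℕ) : ℕ :=
  ((ssp f j j').toOrderHom ⟨min r (j'.val - j.val),
    Nat.lt_succ_of_le (min_le_right _ _)⟩).val

lemma sv_le (f : Necklace N J ⟶ S) (j j' : Fin (N+1)) (r : ℕ) :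
    sv f j j' r ≤ msp f j j' :=
  Nat.lt_succ_iff.1 ((ssp f j j').toOrderHom _).isLt

lemma sv_mono (f : Necklace N J ⟶ S) (j j' : Fin (N+1)) {r r' : ℕ} (h : r ≤ r') :
    sv f j j' r ≤ sv f j j' r' :=
  (ssp f j j').toOrderHom.monotone (by simp only [Fin.mk_le_mk]; omega)

lemma sv_zero (f : Necklace N J ⟶ S) (j j' : Fin (N+1)) : sv f j j' 0 = 0 := by
  have h0 := surj_zero ((ssp f j j').toOrderHom) (ssp_surj f j j')
  have : (⟨min 0 (j'.val - j.val), Nat.lt_succ_of_le (min_le_right _ _)⟩ :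
      Fin (j'.val - j.val + 1)) = 0 := by
    apply Fin.ext; simp
  rw [sv, this, h0]
  rfl

lemma sv_last (f : Necklace N J ⟶ S) (j j' : Fin (N+1)) :
    sv f j j' (j'.val - j.val) = msp f j j' := by
  have hl := surj_last ((ssp f j j').toOrderHom) (ssp_surj f j j')
  have : (⟨min (j'.val - j.val) (j'.val - j.val), Nat.lt_succ_of_le (min_le_right _ _)⟩ :
      Fin (j'.val - j.val + 1)) = Fin.last _ := by
    apply Fin.ext; simp
  rw [sv, this]
  exact congrArg Fin.val hl

lemma sv_step (f : Necklace N J ⟶ S) (j j' : Fin (N+1)) {r : ℕ} (hr : r < j'.val - j.val) :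
    sv f j j' (r+1) ≤ sv f j j' r + 1 := by
  have := surj_step ((ssp f j j').toOrderHom) (ssp_surj f j j') ⟨r, hr⟩
  have e1 : (Fin.castSucc ⟨r, hr⟩ : Fin (j'.val - j.val + 1)) =
      ⟨min r (j'.val - j.val), Nat.lt_succ_of_le (min_le_right _ _)⟩ := by
    apply Fin.ext; simp; omega
  have e2 : (Fin.succ ⟨r, hr⟩ : Fin (j'.val - j.val + 1)) =
      ⟨min (r+1) (j'.val - j.val), Nat.lt_succ_of_le (min_le_right _ _)⟩ := by
    apply Fin.ext; simp; omega
  rw [e1, e2] at this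
  exact this

variable (f : Necklace N J ⟶ S) (h0 : (0 : Fin (N+1)) ∈ J) (hN : Fin.last N ∈ J)

/-- whether the edge `u → u+1` survives in the nondegenerate quotient. -/
def kp (u : Fin N) : Prop :=
  sv f (jb h0 u.castSucc) (ja hN u.succ) (u.val + 1 - (jb h0 u.castSucc).val) ≠
  sv f (jb h0 u.castSucc) (ja hN u.succ) (u.val - (jb h0 u.castSucc).val)

noncomputable def kset : Finset (Fin N) :=
  @Finset.filter _ (kp f h0 hN) (Classical.decPred _) Finset.univ

noncomputable def NN : ℕ := (kset f h0 hN).card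

noncomputable def pset (v : Fin (N+1)) : Finset (Fin N) :=
  @Finset.filter _ (fun u => kp f h0 hN u ∧ u.castSucc < v) (Classical.decPred _) Finset.univ

lemma pset_subset (v : Fin (N+1)) : pset f h0 hN v ⊆ kset f h0 hN := by
  intro u hu
  simp only [pset, Finset.mem_filter] at hu
  simp only [kset, Finset.mem_filter]
  exact ⟨hu.1, hu.2.1⟩

noncomputable def pi (v : Fin (N+1)) : Fin (NN f h0 hN + 1) :=
  ⟨(pset f h0 hN v).card,
    Nat.lt_succ_of_le (Finset.card_le_card (pset_subset f h0 hN v))⟩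

lemma pi_mono : Monotone (pi f h0 hN) := by
  intro v w hvw
  simp only [pi, Fin.mk_le_mk]
  apply Finset.card_le_card
  intro u hu
  simp only [pset, Finset.mem_filter] at hu ⊢
  exact ⟨hu.1, ⟨hu.2.1, lt_of_lt_of_le hu.2.2 hvw⟩⟩

lemma pi_zero : pi f h0 hN 0 = 0 := by
  apply Fin.ext
  show (pset f h0 hN 0).card = 0
  rw [Finset.card_eq_zero]
  apply Finset.eq_empty_iff_forall_notMem.2
  intro u hu
  simp only [pset, Finset.mem_filter] at hu
  have := hu.2.2
  rw [Fin.lt_def] at this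
  simp only [Fin.val_zero] at this
  omega

lemma pi_last : (pi f h0 hN (Fin.last N)).val = NN f h0 hN := by
  show (pset f h0 hN (Fin.last N)).card = (kset f h0 hN).card
  congr 1
  apply Finset.ext
  intro u
  simp only [pset, kset, Finset.mem_filter, Finset.mem_univ, true_and]
  constructor
  · exact fun h => h.1
  · intro h
    exact ⟨h, Fin.castSucc_lt_last u⟩

lemma pi_step_pos (u : Fin N) (hk : kp f h0 hN u) :
    (pi f h0 hN u.succ).val = (pi f h0 hN u.castSucc).val + 1 := by
  show (pset f h0 hN u.succ).card = (pset f h0 hN u.castSucc).card + 1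
  have he : pset f h0 hN u.succ = insert u (pset f h0 hN u.castSucc) := by
    apply Finset.ext
    intro w
    simp only [pset, Finset.mem_filter, Finset.mem_univ, true_and, Finset.mem_insert]
    constructor
    · rintro ⟨h1, h2⟩
      rw [Fin.lt_def] at h2
      simp only [Fin.coe_castSucc, Fin.val_succ] at h2
      rcases Nat.lt_succ_iff_lt_or_eq.1 h2 with h3 | h3
      · exact Or.inr ⟨h1, by rw [Fin.lt_def]; simpa using h3⟩
      · exact Or.inl (Fin.ext h3)
    · rintro (rfl | ⟨h1, h2⟩)
      · exact ⟨hk, by rw [Fin.lt_def]; simp⟩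
      · refine ⟨h1, ?_⟩
        rw [Fin.lt_def] at h2 ⊢
        simp only [Fin.coe_castSucc, Fin.val_succ] at h2 ⊢
        omega
  rw [he, Finset.card_insert_of_notMem]
  intro hc
  simp only [pset, Finset.mem_filter] at hc
  exact absurd hc.2.2 (lt_irrefl _)

lemma pi_step_neg (u : Fin N) (hk : ¬ kp f h0 hN u) :
    (pi f h0 hN u.succ).val = (pi f h0 hN u.castSucc).val := by
  show (pset f h0 hN u.succ).card = (pset f h0 hN u.castSucc).card
  congr 1
  apply Finset.ext
  intro w
  simp only [pset, Finset.mem_filter, Finset.mem_univ, true_and]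
  constructor
  · rintro ⟨h1, h2⟩
    refine ⟨h1, ?_⟩
    rw [Fin.lt_def] at h2 ⊢
    simp only [Fin.coe_castSucc, Fin.val_succ] at h2 ⊢
    rcases Nat.lt_succ_iff_lt_or_eq.1 h2 with h3 | h3
    · exact h3
    · have : w = u := Fin.ext h3
      subst this
      exact absurd h1 hk
  · rintro ⟨h1, h2⟩
    refine ⟨h1, ?_⟩
    rw [Fin.lt_def] at h2 ⊢
    simp only [Fin.coe_castSucc, Fin.val_succ] at h2 ⊢
    omega

lemma pi_step_le (u : Fin N) :
    (pi f h0 hN u.succ).val ≤ (pi f h0 hN u.castSucc).val + 1 := by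
  by_cases hk : kp f h0 hN u
  · rw [pi_step_pos f h0 hN u hk]
  · rw [pi_step_neg f h0 hN u hk]; omega

lemma pi_step_ge (u : Fin N) :
    (pi f h0 hN u.castSucc).val ≤ (pi f h0 hN u.succ).val := by
  have := pi_mono f h0 hN (le_of_lt (Fin.castSucc_lt_succ (i := u)))
  exact this

lemma pi_surj : Function.Surjective (pi f h0 hN) := by
  intro c
  suffices h : ∀ k : ℕ, k ≤ NN f h0 hN → ∃ v, (pi f h0 hN v).val = k by
    obtain ⟨v, hv⟩ := h c.val (Nat.lt_succ_iff.1 c.isLt)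
    exact ⟨v, Fin.ext hv⟩
  intro k hk
  set Vset : Finset (Fin (N+1)) :=
    @Finset.filter _ (fun v => k ≤ (pi f h0 hN v).val) (Classical.decPred _) Finset.univ
    with hVset
  have hne : Vset.Nonempty := ⟨Fin.last N, by
    simp only [hVset, Finset.mem_filter, Finset.mem_univ, true_and]
    rw [pi_last]; exact hk⟩
  set v := Vset.min' hne with hv
  have hvmem : k ≤ (pi f h0 hN v).val := by
    have := Vset.min'_mem hne
    simp only [hVset, Finset.mem_filter] at this
    exact this.2
  rcases Nat.eq_zero_or_pos v.val with h1 | h1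
  · refine ⟨v, le_antisymm ?_ hvmem⟩
    have : v = 0 := Fin.ext h1
    rw [this, pi_zero]
    exact Nat.zero_le _
  · have hvN : v.val - 1 < N := by have := v.isLt; omega
    set u : Fin N := ⟨v.val - 1, hvN⟩ with hu
    have hsucc : u.succ = v := by apply Fin.ext; simp [hu]; omega
    have hlt : u.castSucc < v := by rw [Fin.lt_def]; show v.val - 1 < v.val; omega
    have hnotmem : ¬ k ≤ (pi f h0 hN u.castSucc).val := by
      intro hc
      have : u.castSucc ∈ Vset := by
        simp only [hVset, Finset.mem_filter, Finset.mem_univ, true_and]; exact hc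
      exact absurd (Vset.min'_le _ this) (not_le.2 hlt)
    refine ⟨v, le_antisymm ?_ hvmem⟩
    rw [← hsucc]
    have h2 := pi_step_le f h0 hN u
    omega

end necklacemain


section spanlemmas

variable {S : SSet} {N : ℕ} {J : Finset (Fin (N + 1))}
variable (f : Necklace N J ⟶ S) (h0 : (0 : Fin (N+1)) ∈ J) (hN : Fin.last N ∈ J)

lemma span_edge (u : Fin N) {j j' : Fin (N+1)} (hsp : IsSpan J j j')
    (h1 : j ≤ u.castSucc) (h2 : u.succ ≤ j') :
    jb h0 u.castSucc = j ∧ ja hN u.succ = j' := by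
  constructor
  · have hA1 : j ≤ jb h0 u.castSucc := le_jb h0 hsp.1 h1
    have hA2 : jb h0 u.castSucc ≤ u.castSucc := jb_le h0 u.castSucc
    rcases eq_or_lt_of_le hA1 with h | h
    · exact h.symm
    · exfalso
      refine hsp.2.2.2 (jb h0 u.castSucc) (jb_mem h0 u.castSucc) ⟨h, ?_⟩
      have : (u.castSucc : Fin (N+1)) < u.succ := by
        rw [Fin.lt_def]; simp
      exact lt_of_le_of_lt hA2 (lt_of_lt_of_le this h2)
  · have hB1 : ja hN u.succ ≤ j' := ja_le hN hsp.2.1 h2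
    have hB2 : u.succ ≤ ja hN u.succ := le_ja hN u.succ
    rcases eq_or_lt_of_le hB1 with h | h
    · exact h
    · exfalso
      refine hsp.2.2.2 (ja hN u.succ) (ja_mem hN u.succ) ⟨?_, h⟩
      have : (u.castSucc : Fin (N+1)) < u.succ := by
        rw [Fin.lt_def]; simp
      exact lt_of_le_of_lt h1 (lt_of_lt_of_le this hB2)

lemma kp_iff (u : Fin N) {j j' : Fin (N+1)} (hsp : IsSpan J j j')
    (h1 : j ≤ u.castSucc) (h2 : u.succ ≤ j') :
    kp f h0 hN u ↔ sv f j j' (u.val + 1 - j.val) ≠ sv f j j' (u.val - j.val) := by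
  obtain ⟨e1, e2⟩ := span_edge h0 hN u hsp h1 h2
  rw [kp, e1, e2]

lemma pi_span {j j' : Fin (N+1)} (hsp : IsSpan J j j') (v : Fin (N+1))
    (hjv : j ≤ v) (hvj : v ≤ j') :
    (pi f h0 hN v).val = (pi f h0 hN j).val + sv f j j' (v.val - j.val) := by
  have hjv' : j.val ≤ v.val := hjv
  have hvj' : v.val ≤ j'.val := hvj
  suffices h : ∀ k : ℕ, ∀ v : Fin (N+1), v.val = j.val + k → v.val ≤ j'.val →
      (pi f h0 hN v).val = (pi f h0 hN j).val + sv f j j' k by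
    have := h (v.val - j.val) v (by omega) (by omega)
    exact this
  intro k
  induction k with
  | zero =>
    intro v hv _
    have : v = j := Fin.ext (by omega)
    rw [this, sv_zero]
    omega
  | succ k IH =>
    intro v hv hvle
    have hjN : j'.val ≤ N := Nat.lt_succ_iff.1 j'.isLt
    have huN : j.val + k < N := by omega
    set u : Fin N := ⟨j.val + k, huN⟩ with hu
    have hsucc : u.succ = v := Fin.ext (by simp [hu]; omega)
    have hc1 : j ≤ u.castSucc := by rw [Fin.le_def]; simp [hu]
    have hc2 : u.succ ≤ j' := by rw [hsucc]; exact Fin.le_def.2 hvle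
    have hcv : (u.castSucc).val = j.val + k := by simp [hu]
    have hIH := IH u.castSucc hcv (by omega)
    have hkp := kp_iff f h0 hN u hsp hc1 hc2
    have huval : u.val = j.val + k := rfl
    have huv : u.val + 1 - j.val = k + 1 := by omega
    have huv2 : u.val - j.val = k := by omega
    rw [huv, huv2] at hkp
    have hstep : sv f j j' (k+1) ≤ sv f j j' k + 1 := sv_step f j j' (by omega)
    have hmono : sv f j j' k ≤ sv f j j' (k+1) := sv_mono f j j' (by omega)
    by_cases hk : kp f h0 hN u
    · have := pi_step_pos f h0 hN u hk
      rw [hsucc] at this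
      have hne := hkp.1 hk
      omega
    · have := pi_step_neg f h0 hN u hk
      rw [hsucc] at this
      have heq : sv f j j' (k+1) = sv f j j' k := by
        by_contra hne
        exact hk (hkp.2 hne)
      omega

lemma pi_span_last {j j' : Fin (N+1)} (hsp : IsSpan J j j') :
    (pi f h0 hN j').val = (pi f h0 hN j).val + msp f j j' := by
  rw [pi_span f h0 hN hsp j' hsp.2.2.1 le_rfl, sv_last]

end spanlemmas

section vertices

variable {S : SSet} {N : ℕ} {J : Finset (Fin (N + 1))}

/-- vertex of a simplex of `S`. -/
def vert {d : ℕ} (c : Fin (d+1)) (x : S _⦋d⦌) : S _⦋0⦌ :=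
  S.map (SimplexCategory.const ⦋0⦌ ⦋d⦌ c).op x

lemma map_map' {A B : SimplexCategory} (g : A ⟶ B) {C : SimplexCategory} (h : B ⟶ C)
    (x : S.obj (Opposite.op C)) :
    S.map (g ≫ h).op x = S.map g.op (S.map h.op x) := by
  rw [CategoryTheory.op_comp]
  exact FunctorToTypes.map_comp_apply S h.op g.op x

lemma vert_map {d e : ℕ} (φ : (⦋d⦌ : SimplexCategory) ⟶ ⦋e⦌) (c : Fin (d+1)) (x : S _⦋e⦌) :
    vert c (S.map φ.op x) = vert (φ.toOrderHom c) x := by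
  rw [vert, vert, ← map_map', SimplexCategory.const_comp]

lemma const_app {A : SimplexCategory} {d : ℕ} (c : Fin (d+1)) (x : S _⦋d⦌) :
    S.map (SimplexCategory.const A ⦋d⦌ c).op x =
      S.map (SimplexCategory.const A ⦋0⦌ 0).op (vert c x) := by
  rw [vert, ← map_map', ← SimplexCategory.const_fac_thru_zero]

lemma vert_app (F : Necklace N J ⟶ S) {m : SimplexCategoryᵒᵖ}
    (a : (Necklace N J).obj m) (c : Fin (m.unop.len + 1)) :
    S.map (SimplexCategory.const ⦋0⦌ m.unop c).op (F.app m a) =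
      F.app (Opposite.op ⦋0⦌) (vtx J (a.1 c)) := by
  have hnat := ConcreteCategory.congr_hom (F.naturality ((SimplexCategory.const ⦋0⦌ m.unop c).op)) a
  dsimp only [types_comp_apply] at hnat
  have hx : (Necklace N J).map ((SimplexCategory.const ⦋0⦌ m.unop c).op) a = vtx J (a.1 c) := by
    apply Subtype.ext
    apply OrderHom.ext
    funext k
    have hk : k = 0 := Subsingleton.elim (α := Fin 1) k 0
    subst hk
    rfl
  rw [hx] at hnat
  exact hnat.symm

variable (f : Necklace N J ⟶ S) (h0 : (0 : Fin (N+1)) ∈ J) (hN : Fin.last N ∈ J)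

lemma zsp_vert {j j' : Fin (N+1)} (hsp : IsSpan J j j') (r : Fin (j'.val - j.val + 1)) :
    vert ((ssp f j j').toOrderHom r) (zsp f j j') =
      f.app (Opposite.op ⦋0⦌) (vtx J ((bead J j j' hsp.2.2.1 hsp.2.2.2).1 r)) := by
  have h1 : vert r (xsp f j j') = f.app _ (vtx J ((bead J j j' hsp.2.2.1 hsp.2.2.2).1 r)) := by
    rw [xsp_of_span f hsp]
    exact vert_app f (bead J j j' hsp.2.2.1 hsp.2.2.2) r
  rw [xsp_eq, vert_map] at h1
  exact h1

lemma zsp_vert_zero {j j' : Fin (N+1)} (hsp : IsSpan J j j') :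
    vert (0 : Fin (msp f j j' + 1)) (zsp f j j') = f.app (Opposite.op ⦋0⦌) (vtx J j) := by
  have := zsp_vert f hsp 0
  rw [surj_zero ((ssp f j j').toOrderHom) (ssp_surj f j j')] at this
  rw [this]
  have hb : ((bead J j j' hsp.2.2.1 hsp.2.2.2).1 (0 : Fin (j'.val - j.val + 1))) = j :=
    Fin.ext (by show j.val + (0 : Fin (j'.val - j.val + 1)).val = j.val; simp)
  rw [hb]

lemma zsp_vert_last {j j' : Fin (N+1)} (hsp : IsSpan J j j') :
    vert (Fin.last (msp f j j')) (zsp f j j') = f.app (Opposite.op ⦋0⦌) (vtx J j') := by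
  have := zsp_vert f hsp (Fin.last _)
  have h2 : (ssp f j j').toOrderHom (Fin.last (j'.val - j.val)) = Fin.last (msp f j j') :=
    surj_last ((ssp f j j').toOrderHom) (ssp_surj f j j')
  rw [h2] at this
  rw [this]
  have hb : ((bead J j j' hsp.2.2.1 hsp.2.2.2).1 (Fin.last (j'.val - j.val))) = j' := by
    apply Fin.ext
    show j.val + (Fin.last (j'.val - j.val)).val = j'.val
    have h3 : j.val ≤ j'.val := hsp.2.2.1
    simp only [Fin.val_last]
    omega
  rw [hb]

lemma joint_chain : ∀ (n : ℕ) (t t' : Fin (N+1)), t ∈ J → t' ∈ J → t ≤ t' →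
    t'.val - t.val = n → pi f h0 hN t = pi f h0 hN t' →
    f.app (Opposite.op ⦋0⦌) (vtx J t) = f.app (Opposite.op ⦋0⦌) (vtx J t') := by
  intro n
  induction n using Nat.strong_induction_on with
  | _ n IH =>
    intro t t' ht ht' hle hn hpi
    rcases Nat.eq_zero_or_pos n with h | h
    · have : t = t' := Fin.ext (by have := Fin.le_def.1 hle; omega)
      rw [this]
    · have hlt : t < t' := by
        rw [Fin.lt_def]
        have := Fin.le_def.1 hle
        omega
      set t₁ := (J.filter (fun s => t < s)).min' ⟨t', by simp [ht', hlt]⟩ with ht₁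
      have ht₁mem : t₁ ∈ J ∧ t < t₁ := by
        have := (J.filter (fun s => t < s)).min'_mem ⟨t', by simp [ht', hlt]⟩
        simp only [Finset.mem_filter] at this
        exact ⟨this.1, this.2⟩
      have ht₁le : t₁ ≤ t' := Finset.min'_le _ _ (by simp [ht', hlt])
      have hspan : IsSpan J t t₁ := by
        refine ⟨ht, ht₁mem.1, le_of_lt ht₁mem.2, ?_⟩
        intro s hs ⟨hs1, hs2⟩
        exact absurd (Finset.min'_le _ s (by simp [hs, hs1])) (not_le.2 hs2)
      have hpit₁ : pi f h0 hN t = pi f h0 hN t₁ :=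
        le_antisymm (pi_mono f h0 hN (le_of_lt ht₁mem.2))
          (hpi ▸ pi_mono f h0 hN ht₁le)
      have hm0 : msp f t t₁ = 0 := by
        have := pi_span_last f h0 hN hspan
        have hv : (pi f h0 hN t₁).val = (pi f h0 hN t).val := congrArg Fin.val hpit₁.symm
        omega
      have hstep : f.app (Opposite.op ⦋0⦌) (vtx J t) = f.app (Opposite.op ⦋0⦌) (vtx J t₁) := by
        rw [← zsp_vert_zero f hspan, ← zsp_vert_last f hspan]
        congr 1
        apply Fin.ext
        simp [hm0]
      rw [hstep]
      refine IH (t'.val - t₁.val) ?_ t₁ t' ht₁mem.1 ht' ht₁le rfl ?_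
      · have h1 := Fin.lt_def.1 ht₁mem.2
        omega
      · rw [← hpit₁]
        exact hpi

end vertices


section formula

set_option maxHeartbeats 1000000

variable {S : SSet} {N : ℕ} {J : Finset (Fin (N + 1))}
variable (f : Necklace N J ⟶ S) (h0 : (0 : Fin (N+1)) ∈ J) (hN : Fin.last N ∈ J)

noncomputable def whom {m : SimplexCategoryᵒᵖ} (a : (Necklace N J).obj m) (j j' : Fin (N+1))
    (hj : j ≤ a.1 0) (hj' : a.1 (Fin.last m.unop.len) ≤ j') :
    m.unop ⟶ (⦋msp f j j'⦌ : SimplexCategory) :=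
  relHom a j j' hj hj' ≫ ssp f j j'

lemma f_formula {m : SimplexCategoryᵒᵖ} (a : (Necklace N J).obj m) {j j' : Fin (N+1)}
    (hsp : IsSpan J j j') (hj : j ≤ a.1 0) (hj' : a.1 (Fin.last m.unop.len) ≤ j') :
    f.app m a = S.map (whom f a j j' hj hj').op (zsp f j j') := by
  rw [bead_formula f a j j' hsp hj hj', ← xsp_of_span f hsp, xsp_eq, whom, map_map']

lemma whom_val {m : SimplexCategoryᵒᵖ} (a : (Necklace N J).obj m) {j j' : Fin (N+1)}
    (hsp : IsSpan J j j') (hj : j ≤ a.1 0) (hj' : a.1 (Fin.last m.unop.len) ≤ j')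
    (i : Fin (m.unop.len + 1)) :
    (((whom f a j j' hj hj').toOrderHom i) : ℕ) =
      (pi f h0 hN (a.1 i)).val - (pi f h0 hN j).val := by
  have hji : j ≤ a.1 i := le_trans hj (a.1.monotone (Fin.zero_le i))
  have hij' : a.1 i ≤ j' := le_trans (a.1.monotone (Fin.le_last i)) hj'
  have hij'v : (a.1 i).val ≤ j'.val := hij'
  have hval : ((whom f a j j' hj hj').toOrderHom i : ℕ) =
      ((ssp f j j').toOrderHom ⟨min ((a.1 i).val - j.val) (j'.val - j.val),
        Nat.lt_succ_of_le (min_le_right _ _)⟩ : ℕ) := by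
    have harg : ((relHom a j j' hj hj').toOrderHom i) =
        (⟨min ((a.1 i).val - j.val) (j'.val - j.val),
          Nat.lt_succ_of_le (min_le_right _ _)⟩ : Fin (j'.val - j.val + 1)) :=
      Fin.ext (by
        show (a.1 i).val - j.val = min ((a.1 i).val - j.val) (j'.val - j.val)
        omega)
    rw [whom, SimplexCategory.comp_toOrderHom]
    show ((ssp f j j').toOrderHom ((relHom a j j' hj hj').toOrderHom i) : ℕ) = _
    rw [harg]
  have hspan := pi_span f h0 hN hsp (a.1 i) hji hij'
  rw [hval]
  rw [show (((ssp f j j').toOrderHom ⟨min ((a.1 i).val - j.val) (j'.val - j.val),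
        Nat.lt_succ_of_le (min_le_right _ _)⟩ : Fin _) : ℕ) =
      sv f j j' ((a.1 i).val - j.val) from rfl]
  omega

lemma f_const_left {m : SimplexCategoryᵒᵖ} (a : (Necklace N J).obj m) {j j' : Fin (N+1)}
    (hsp : IsSpan J j j') (hj : j ≤ a.1 0) (hj' : a.1 (Fin.last m.unop.len) ≤ j')
    (hc : ∀ i, pi f h0 hN (a.1 i) = pi f h0 hN j) :
    f.app m a = S.map (SimplexCategory.const m.unop ⦋0⦌ 0).op
      (f.app (Opposite.op ⦋0⦌) (vtx J j)) := by
  rw [f_formula f a hsp hj hj']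
  have hw : whom f a j j' hj hj' = SimplexCategory.const m.unop ⦋msp f j j'⦌ 0 := by
    apply SimplexCategory.Hom.ext
    apply OrderHom.ext
    funext i
    apply Fin.ext
    rw [whom_val f h0 hN a hsp hj hj' i, hc i, SimplexCategory.const_apply]
    simp
  rw [hw, const_app, zsp_vert_zero f hsp]

lemma f_const_right {m : SimplexCategoryᵒᵖ} (a : (Necklace N J).obj m) {j j' : Fin (N+1)}
    (hsp : IsSpan J j j') (hj : j ≤ a.1 0) (hj' : a.1 (Fin.last m.unop.len) ≤ j')
    (hc : ∀ i, pi f h0 hN (a.1 i) = pi f h0 hN j') :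
    f.app m a = S.map (SimplexCategory.const m.unop ⦋0⦌ 0).op
      (f.app (Opposite.op ⦋0⦌) (vtx J j')) := by
  rw [f_formula f a hsp hj hj']
  have hlast := pi_span_last f h0 hN hsp
  have hw : whom f a j j' hj hj' =
      SimplexCategory.const m.unop ⦋msp f j j'⦌ (Fin.last (msp f j j')) := by
    apply SimplexCategory.Hom.ext
    apply OrderHom.ext
    funext i
    apply Fin.ext
    rw [whom_val f h0 hN a hsp hj hj' i, hc i, SimplexCategory.const_apply]
    show (pi f h0 hN j').val - (pi f h0 hN j).val = (Fin.last (msp f j j')).val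
    simp only [Fin.val_last]
    omega
  rw [hw, const_app, zsp_vert_last f hsp]

lemma coeq_aux {m : SimplexCategoryᵒᵖ} (a b : (Necklace N J).obj m)
    (hab : ∀ i, pi f h0 hN (a.1 i) = pi f h0 hN (b.1 i))
    (hjj : jb h0 (a.1 0) ≤ jb h0 (b.1 0)) :
    f.app m a = f.app m b := by
  obtain ⟨j₁, hj₁⟩ : ∃ x, jb h0 (a.1 0) = x := ⟨_, rfl⟩
  obtain ⟨j₁', hj₁'⟩ : ∃ x, ja hN (a.1 (Fin.last m.unop.len)) = x := ⟨_, rfl⟩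
  obtain ⟨j₂, hj₂⟩ : ∃ x, jb h0 (b.1 0) = x := ⟨_, rfl⟩
  obtain ⟨j₂', hj₂'⟩ : ∃ x, ja hN (b.1 (Fin.last m.unop.len)) = x := ⟨_, rfl⟩
  rw [hj₁, hj₂] at hjj
  have hsp₁ : IsSpan J j₁ j₁' := by
    rw [← hj₁, ← hj₁']
    exact span_of h0 hN (a.1.monotone (Fin.zero_le _)) a.2
  have hsp₂ : IsSpan J j₂ j₂' := by
    rw [← hj₂, ← hj₂']
    exact span_of h0 hN (b.1.monotone (Fin.zero_le _)) b.2
  have ha1 : j₁ ≤ a.1 0 := hj₁ ▸ jb_le h0 _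
  have ha2 : a.1 (Fin.last m.unop.len) ≤ j₁' := hj₁' ▸ le_ja hN _
  have hb1 : j₂ ≤ b.1 0 := hj₂ ▸ jb_le h0 _
  have hb2 : b.1 (Fin.last m.unop.len) ≤ j₂' := hj₂' ▸ le_ja hN _
  clear hj₁ hj₁' hj₂ hj₂'
  rcases eq_or_lt_of_le hjj with heq | hlt
  · subst heq
    rcases lt_trichotomy j₁' j₂' with h | h | h
    · -- j₁' < j₂' forces j₁' = j₁, a is constant
      have hj1'le : j₁' ≤ j₁ := by
        by_contra hcon
        push_neg at hcon
        exact hsp₂.2.2.2 j₁' hsp₁.2.1 ⟨hcon, h⟩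
      have hj1'eq : j₁' = j₁ := le_antisymm hj1'le hsp₁.2.2.1
      have hconst : ∀ i, a.1 i = j₁ := by
        intro i
        have l1 : j₁ ≤ a.1 i := le_trans ha1 (a.1.monotone (Fin.zero_le i))
        have l2 : a.1 i ≤ j₁ := hj1'eq ▸ le_trans (a.1.monotone (Fin.le_last i)) ha2
        exact le_antisymm l2 l1
      have hca : ∀ i, pi f h0 hN (a.1 i) = pi f h0 hN j₁ := fun i => by rw [hconst i]
      have hcb : ∀ i, pi f h0 hN (b.1 i) = pi f h0 hN j₁ := fun i => by
        rw [← hab i, hca i]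
      rw [f_const_left f h0 hN a hsp₁ ha1 ha2 hca,
        f_const_left f h0 hN b hsp₂ hb1 hb2 hcb]
    · subst h
      rw [f_formula f a hsp₁ ha1 ha2, f_formula f b hsp₂ hb1 hb2]
      have hwhom : whom f a j₁ j₁' ha1 ha2 = whom f b j₁ j₁' hb1 hb2 := by
        apply SimplexCategory.Hom.ext
        apply OrderHom.ext
        funext i
        apply Fin.ext
        rw [whom_val f h0 hN a hsp₁ ha1 ha2 i, whom_val f h0 hN b hsp₂ hb1 hb2 i, hab i]
      rw [hwhom]
    · -- j₂' < j₁' forces j₂' = j₁, b is constant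
      have hj2'le : j₂' ≤ j₁ := by
        by_contra hcon
        push_neg at hcon
        exact hsp₁.2.2.2 j₂' hsp₂.2.1 ⟨hcon, h⟩
      have hj2'eq : j₂' = j₁ := le_antisymm hj2'le hsp₂.2.2.1
      have hconst : ∀ i, b.1 i = j₁ := by
        intro i
        have l1 : j₁ ≤ b.1 i := le_trans hb1 (b.1.monotone (Fin.zero_le i))
        have l2 : b.1 i ≤ j₁ := hj2'eq ▸ le_trans (b.1.monotone (Fin.le_last i)) hb2
        exact le_antisymm l2 l1
      have hcb : ∀ i, pi f h0 hN (b.1 i) = pi f h0 hN j₁ := fun i => by rw [hconst i]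
      have hca : ∀ i, pi f h0 hN (a.1 i) = pi f h0 hN j₁ := fun i => by
        rw [hab i, hcb i]
      rw [f_const_left f h0 hN a hsp₁ ha1 ha2 hca,
        f_const_left f h0 hN b hsp₂ hb1 hb2 hcb]
  · -- j₁ < j₂ : disjoint spans, everything collapses
    have hj1'le : j₁' ≤ j₂ := by
      by_contra hcon
      push_neg at hcon
      exact hsp₁.2.2.2 j₂ hsp₂.1 ⟨hlt, hcon⟩
    have key : ∀ i, pi f h0 hN (a.1 i) = pi f h0 hN j₁' ∧
        pi f h0 hN (b.1 i) = pi f h0 hN j₂ ∧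
        pi f h0 hN j₁' = pi f h0 hN j₂ := by
      have c1 : pi f h0 hN (a.1 0) ≤ pi f h0 hN (a.1 (Fin.last m.unop.len)) :=
        pi_mono f h0 hN (a.1.monotone (Fin.zero_le _))
      have c2 : pi f h0 hN (a.1 (Fin.last m.unop.len)) ≤ pi f h0 hN j₁' :=
        pi_mono f h0 hN ha2
      have c3 : pi f h0 hN j₁' ≤ pi f h0 hN j₂ := pi_mono f h0 hN hj1'le
      have c4 : pi f h0 hN j₂ ≤ pi f h0 hN (b.1 0) := pi_mono f h0 hN hb1
      have c5 : pi f h0 hN (b.1 0) = pi f h0 hN (a.1 0) := (hab 0).symm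
      intro i
      have d1 : pi f h0 hN (a.1 0) ≤ pi f h0 hN (a.1 i) :=
        pi_mono f h0 hN (a.1.monotone (Fin.zero_le i))
      have d2 : pi f h0 hN (a.1 i) ≤ pi f h0 hN (a.1 (Fin.last m.unop.len)) :=
        pi_mono f h0 hN (a.1.monotone (Fin.le_last i))
      have e1 : pi f h0 hN (a.1 i) = pi f h0 hN j₁' := by
        apply le_antisymm (le_trans d2 c2)
        calc pi f h0 hN j₁' ≤ pi f h0 hN (b.1 0) := le_trans c3 c4
        _ = pi f h0 hN (a.1 0) := c5
        _ ≤ pi f h0 hN (a.1 i) := d1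
      have e3 : pi f h0 hN j₁' = pi f h0 hN j₂ := by
        apply le_antisymm c3
        calc pi f h0 hN j₂ ≤ pi f h0 hN (b.1 0) := c4
        _ = pi f h0 hN (a.1 0) := c5
        _ ≤ pi f h0 hN (a.1 (Fin.last m.unop.len)) := c1
        _ ≤ pi f h0 hN j₁' := c2
      refine ⟨e1, ?_, e3⟩
      rw [← hab i, e1, e3]
    rw [f_const_right f h0 hN a hsp₁ ha1 ha2 (fun i => (key i).1),
      f_const_left f h0 hN b hsp₂ hb1 hb2 (fun i => (key i).2.1)]
    have hchain := joint_chain f h0 hN (j₂.val - j₁'.val) j₁' j₂ hsp₁.2.1 hsp₂.1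
      hj1'le rfl (key 0).2.2
    rw [hchain]

lemma coeq {m : SimplexCategoryᵒᵖ} (a b : (Necklace N J).obj m)
    (hab : ∀ i, pi f h0 hN (a.1 i) = pi f h0 hN (b.1 i)) :
    f.app m a = f.app m b := by
  rcases le_total (jb h0 (a.1 0)) (jb h0 (b.1 0)) with h | h
  · exact coeq_aux f h0 hN a b hab h
  · exact (coeq_aux f h0 hN b a (fun i => (hab i).symm) h).symm

end formula


section construction

set_option maxHeartbeats 1000000

variable {S : SSet} {N : ℕ} {J : Finset (Fin (N + 1))}
variable (f : Necklace N J ⟶ S) (h0 : (0 : Fin (N+1)) ∈ J) (hN : Fin.last N ∈ J)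

noncomputable def JJ : Finset (Fin (NN f h0 hN + 1)) := J.image (pi f h0 hN)

lemma JJ_zero : (0 : Fin (NN f h0 hN + 1)) ∈ JJ f h0 hN :=
  Finset.mem_image.2 ⟨0, h0, pi_zero f h0 hN⟩

lemma JJ_last : Fin.last (NN f h0 hN) ∈ JJ f h0 hN :=
  Finset.mem_image.2 ⟨Fin.last N, hN, Fin.ext (pi_last f h0 hN)⟩

lemma pi_lt_of_lt {v w : Fin (N+1)} (h : pi f h0 hN v < pi f h0 hN w) : v < w := by
  by_contra hc
  push_neg at hc
  exact absurd (pi_mono f h0 hN hc) (not_le.2 h)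

lemma pi_cond : ∀ v w : Fin (N+1), v ≤ w → (∀ t ∈ J, ¬(v < t ∧ t < w)) →
    ∀ t' ∈ JJ f h0 hN, ¬(pi f h0 hN v < t' ∧ t' < pi f h0 hN w) := by
  intro v w _ hno t' ht' ⟨hl, hr⟩
  obtain ⟨t, htJ, rfl⟩ := Finset.mem_image.1 ht'
  exact hno t htJ ⟨pi_lt_of_lt f h0 hN hl, pi_lt_of_lt f h0 hN hr⟩

noncomputable def pmap : Necklace N J ⟶ Necklace (NN f h0 hN) (JJ f h0 hN) :=
  mapOfVtx ⟨pi f h0 hN, pi_mono f h0 hN⟩ (pi_cond f h0 hN)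

lemma pmap_app {m : SimplexCategoryᵒᵖ} (x : (Necklace N J).obj m)
    (i : Fin (m.unop.len + 1)) :
    (((pmap f h0 hN).app m x).1 : Fin (m.unop.len + 1) →o Fin (NN f h0 hN + 1)) i =
      pi f h0 hN (x.1 i) := rfl

/-- left old joint below a new vertex. -/
noncomputable def lj (y0 : Fin (NN f h0 hN + 1)) : Fin (N+1) :=
  (J.filter (fun t => pi f h0 hN t ≤ y0)).max' ⟨0, by
    simp only [Finset.mem_filter]
    exact ⟨h0, by rw [pi_zero]; exact Fin.zero_le _⟩⟩

lemma lj_mem (y0 : Fin (NN f h0 hN + 1)) : lj f h0 hN y0 ∈ J := by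
  have := (J.filter (fun t => pi f h0 hN t ≤ y0)).max'_mem ⟨0, by
    simp only [Finset.mem_filter]
    exact ⟨h0, by rw [pi_zero]; exact Fin.zero_le _⟩⟩
  simp only [Finset.mem_filter] at this
  exact this.1

lemma lj_pi_le (y0 : Fin (NN f h0 hN + 1)) : pi f h0 hN (lj f h0 hN y0) ≤ y0 := by
  have := (J.filter (fun t => pi f h0 hN t ≤ y0)).max'_mem ⟨0, by
    simp only [Finset.mem_filter]
    exact ⟨h0, by rw [pi_zero]; exact Fin.zero_le _⟩⟩
  simp only [Finset.mem_filter] at this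
  exact this.2

lemma lj_max (y0 : Fin (NN f h0 hN + 1)) {t : Fin (N+1)} (ht : t ∈ J)
    (h : pi f h0 hN t ≤ y0) : t ≤ lj f h0 hN y0 :=
  Finset.le_max' _ _ (by simp [ht, h])

/-- right old joint above a new vertex (at or beyond `lj`). -/
noncomputable def rj (y0 yl : Fin (NN f h0 hN + 1)) : Fin (N+1) :=
  (J.filter (fun t => yl ≤ pi f h0 hN t ∧ lj f h0 hN y0 ≤ t)).min' ⟨Fin.last N, by
    simp only [Finset.mem_filter]
    refine ⟨hN, ?_, Fin.le_last _⟩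
    rw [Fin.le_def, pi_last]
    exact Nat.lt_succ_iff.1 yl.isLt⟩

lemma rj_spec (y0 yl : Fin (NN f h0 hN + 1)) :
    rj f h0 hN y0 yl ∈ J ∧ yl ≤ pi f h0 hN (rj f h0 hN y0 yl) ∧
      lj f h0 hN y0 ≤ rj f h0 hN y0 yl := by
  have := (J.filter (fun t => yl ≤ pi f h0 hN t ∧ lj f h0 hN y0 ≤ t)).min'_mem ⟨Fin.last N, by
    simp only [Finset.mem_filter]
    refine ⟨hN, ?_, Fin.le_last _⟩
    rw [Fin.le_def, pi_last]
    exact Nat.lt_succ_iff.1 yl.isLt⟩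
  simp only [Finset.mem_filter] at this
  exact ⟨this.1, this.2.1, this.2.2⟩

lemma rj_min (y0 yl : Fin (NN f h0 hN + 1)) {t : Fin (N+1)} (ht : t ∈ J)
    (h1 : yl ≤ pi f h0 hN t) (h2 : lj f h0 hN y0 ≤ t) : rj f h0 hN y0 yl ≤ t :=
  Finset.min'_le _ _ (by simp [ht, h1, h2])

lemma span_lr (y0 yl : Fin (NN f h0 hN + 1)) (hyl : y0 ≤ yl)
    (hno : ∀ t' ∈ JJ f h0 hN, ¬(y0 < t' ∧ t' < yl)) :
    IsSpan J (lj f h0 hN y0) (rj f h0 hN y0 yl) := by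
  refine ⟨lj_mem f h0 hN y0, (rj_spec f h0 hN y0 yl).1, (rj_spec f h0 hN y0 yl).2.2, ?_⟩
  intro t ht ⟨hl, hr⟩
  rcases le_or_gt (pi f h0 hN t) y0 with h1 | h1
  · exact absurd (lj_max f h0 hN y0 ht h1) (not_le.2 hl)
  rcases le_or_gt yl (pi f h0 hN t) with h2 | h2
  · exact absurd (rj_min f h0 hN y0 yl ht h2 (le_of_lt hl)) (not_le.2 hr)
  exact hno (pi f h0 hN t) (Finset.mem_image.2 ⟨t, ht, rfl⟩) ⟨h1, h2⟩

lemma pi_lj (y0 : Fin (NN f h0 hN + 1)) (hy0 : y0 ∈ JJ f h0 hN) :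
    pi f h0 hN (lj f h0 hN y0) = y0 := by
  obtain ⟨t, htJ, rfl⟩ := Finset.mem_image.1 hy0
  exact le_antisymm (lj_pi_le f h0 hN _)
    (pi_mono f h0 hN (lj_max f h0 hN _ htJ le_rfl))

lemma pi_rj (y0 yl : Fin (NN f h0 hN + 1)) (hyl : yl ∈ JJ f h0 hN) (h01 : y0 ≤ yl) :
    pi f h0 hN (rj f h0 hN y0 yl) = yl := by
  obtain ⟨t, htJ, rfl⟩ := Finset.mem_image.1 hyl
  rcases le_or_gt (lj f h0 hN y0) t with h | h
  · exact le_antisymm (pi_mono f h0 hN (rj_min f h0 hN _ _ htJ le_rfl h))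
      (rj_spec f h0 hN _ _).2.1
  · -- t < lj y0 : then pi (lj y0) = pi t and lj itself qualifies
    have h1 : pi f h0 hN t ≤ pi f h0 hN (lj f h0 hN y0) := pi_mono f h0 hN (le_of_lt h)
    have h2 : pi f h0 hN (lj f h0 hN y0) ≤ y0 := lj_pi_le f h0 hN y0
    have h3 : pi f h0 hN (lj f h0 hN y0) = pi f h0 hN t := le_antisymm (le_trans h2 h01) h1
    have h4 : rj f h0 hN y0 (pi f h0 hN t) ≤ lj f h0 hN y0 :=
      rj_min f h0 hN _ _ (lj_mem f h0 hN y0) (le_of_eq h3.symm) le_rfl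
    have h5 : lj f h0 hN y0 ≤ rj f h0 hN y0 (pi f h0 hN t) := (rj_spec f h0 hN _ _).2.2
    rw [le_antisymm h4 h5, h3]

/-- clamped minimal section of the bead epimorphism. -/
noncomputable def sinv (j j' : Fin (N+1)) (c : ℕ) : ℕ :=
  ((minSec ((ssp f j j').toOrderHom) (ssp_surj f j j'))
    ⟨min c (msp f j j'), Nat.lt_succ_of_le (min_le_right _ _)⟩).val

lemma sinv_le (j j' : Fin (N+1)) (c : ℕ) : sinv f j j' c ≤ j'.val - j.val :=
  Nat.lt_succ_iff.1 (((minSec ((ssp f j j').toOrderHom) (ssp_surj f j j')) _).isLt)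

lemma sinv_mono (j j' : Fin (N+1)) {c c' : ℕ} (h : c ≤ c') :
    sinv f j j' c ≤ sinv f j j' c' :=
  (minSec ((ssp f j j').toOrderHom) (ssp_surj f j j')).monotone
    (by simp only [Fin.mk_le_mk]; omega)

lemma sv_sinv (j j' : Fin (N+1)) {c : ℕ} (hc : c ≤ msp f j j') :
    sv f j j' (sinv f j j' c) = c := by
  have hmin : min (sinv f j j' c) (j'.val - j.val) = sinv f j j' c := by
    have := sinv_le f j j' c
    omega
  have hspec := minSec_spec ((ssp f j j').toOrderHom) (ssp_surj f j j')
    ⟨min c (msp f j j'), Nat.lt_succ_of_le (min_le_right _ _)⟩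
  rw [sv]
  have harg : (⟨min (sinv f j j' c) (j'.val - j.val),
      Nat.lt_succ_of_le (min_le_right _ _)⟩ : Fin (j'.val - j.val + 1)) =
      (minSec ((ssp f j j').toOrderHom) (ssp_surj f j j'))
        ⟨min c (msp f j j'), Nat.lt_succ_of_le (min_le_right _ _)⟩ := by
    apply Fin.ext
    show min (sinv f j j' c) (j'.val - j.val) = sinv f j j' c
    exact hmin
  rw [harg, hspec]
  show min c (msp f j j') = c
  omega

end construction


section lifting

set_option maxHeartbeats 1000000

variable {S : SSet} {N : ℕ} {J : Finset (Fin (N + 1))}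
variable (f : Necklace N J ⟶ S) (h0 : (0 : Fin (N+1)) ∈ J) (hN : Fin.last N ∈ J)

noncomputable def liftOH {m : SimplexCategoryᵒᵖ}
    (y : (Necklace (NN f h0 hN) (JJ f h0 hN)).obj m) :
    Fin (m.unop.len + 1) →o Fin (N + 1) where
  toFun i := ⟨(lj f h0 hN (y.1 0)).val +
      sinv f (lj f h0 hN (y.1 0)) (rj f h0 hN (y.1 0) (y.1 (Fin.last m.unop.len)))
        ((y.1 i).val - (pi f h0 hN (lj f h0 hN (y.1 0))).val), by
    have hsp := span_lr f h0 hN (y.1 0) (y.1 (Fin.last m.unop.len))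
      (y.1.monotone (Fin.zero_le _)) y.2
    have h1 : (lj f h0 hN (y.1 0)).val ≤
        (rj f h0 hN (y.1 0) (y.1 (Fin.last m.unop.len))).val := hsp.2.2.1
    have h2 := sinv_le f (lj f h0 hN (y.1 0)) (rj f h0 hN (y.1 0) (y.1 (Fin.last m.unop.len)))
      ((y.1 i).val - (pi f h0 hN (lj f h0 hN (y.1 0))).val)
    have h3 : (rj f h0 hN (y.1 0) (y.1 (Fin.last m.unop.len))).val ≤ N :=
      Nat.lt_succ_iff.1 (rj f h0 hN (y.1 0) (y.1 (Fin.last m.unop.len))).isLt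
    omega⟩
  monotone' := by
    intro i i' h
    simp only [Fin.mk_le_mk]
    have hv : (y.1 i).val ≤ (y.1 i').val := y.1.monotone h
    have := sinv_mono f (lj f h0 hN (y.1 0)) (rj f h0 hN (y.1 0) (y.1 (Fin.last m.unop.len)))
      (Nat.sub_le_sub_right hv (pi f h0 hN (lj f h0 hN (y.1 0))).val)
    omega

lemma lift_lb {m : SimplexCategoryᵒᵖ} (y : (Necklace (NN f h0 hN) (JJ f h0 hN)).obj m)
    (i : Fin (m.unop.len + 1)) :
    lj f h0 hN (y.1 0) ≤ liftOH f h0 hN y i := by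
  rw [Fin.le_def]
  exact Nat.le_add_right _ _

lemma lift_ub {m : SimplexCategoryᵒᵖ} (y : (Necklace (NN f h0 hN) (JJ f h0 hN)).obj m)
    (i : Fin (m.unop.len + 1)) :
    liftOH f h0 hN y i ≤ rj f h0 hN (y.1 0) (y.1 (Fin.last m.unop.len)) := by
  rw [Fin.le_def]
  have hsp := span_lr f h0 hN (y.1 0) (y.1 (Fin.last m.unop.len))
    (y.1.monotone (Fin.zero_le _)) y.2
  have h1 : (lj f h0 hN (y.1 0)).val ≤
      (rj f h0 hN (y.1 0) (y.1 (Fin.last m.unop.len))).val := hsp.2.2.1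
  have h2 := sinv_le f (lj f h0 hN (y.1 0)) (rj f h0 hN (y.1 0) (y.1 (Fin.last m.unop.len)))
    ((y.1 i).val - (pi f h0 hN (lj f h0 hN (y.1 0))).val)
  show (lj f h0 hN (y.1 0)).val + _ ≤ _
  omega

lemma pi_lift {m : SimplexCategoryᵒᵖ} (y : (Necklace (NN f h0 hN) (JJ f h0 hN)).obj m)
    (i : Fin (m.unop.len + 1)) :
    pi f h0 hN (liftOH f h0 hN y i) = y.1 i := by
  have hsp := span_lr f h0 hN (y.1 0) (y.1 (Fin.last m.unop.len))
    (y.1.monotone (Fin.zero_le _)) y.2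
  have hj0 : pi f h0 hN (lj f h0 hN (y.1 0)) ≤ y.1 0 := lj_pi_le f h0 hN _
  have hjl : y.1 (Fin.last m.unop.len) ≤
      pi f h0 hN (rj f h0 hN (y.1 0) (y.1 (Fin.last m.unop.len))) :=
    (rj_spec f h0 hN _ _).2.1
  have hml := pi_span_last f h0 hN hsp
  have hy0i : (y.1 0).val ≤ (y.1 i).val := y.1.monotone (Fin.zero_le i)
  have hyil : (y.1 i).val ≤ (y.1 (Fin.last m.unop.len)).val := y.1.monotone (Fin.le_last i)
  have hj0v : (pi f h0 hN (lj f h0 hN (y.1 0))).val ≤ (y.1 0).val := hj0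
  have hjlv : (y.1 (Fin.last m.unop.len)).val ≤
      (pi f h0 hN (rj f h0 hN (y.1 0) (y.1 (Fin.last m.unop.len)))).val := hjl
  have hcle : (y.1 i).val - (pi f h0 hN (lj f h0 hN (y.1 0))).val ≤
      msp f (lj f h0 hN (y.1 0)) (rj f h0 hN (y.1 0) (y.1 (Fin.last m.unop.len))) := by
    omega
  have hval := pi_span f h0 hN hsp (liftOH f h0 hN y i) (lift_lb f h0 hN y i)
    (lift_ub f h0 hN y i)
  have hsub : (liftOH f h0 hN y i).val - (lj f h0 hN (y.1 0)).val =
      sinv f (lj f h0 hN (y.1 0)) (rj f h0 hN (y.1 0) (y.1 (Fin.last m.unop.len)))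
        ((y.1 i).val - (pi f h0 hN (lj f h0 hN (y.1 0))).val) := by
    show (lj f h0 hN (y.1 0)).val + _ - (lj f h0 hN (y.1 0)).val = _
    omega
  rw [hsub, sv_sinv f _ _ hcle] at hval
  apply Fin.ext
  rw [hval]
  omega

lemma lift_cond {m : SimplexCategoryᵒᵖ} (y : (Necklace (NN f h0 hN) (JJ f h0 hN)).obj m) :
    NeckCond J (liftOH f h0 hN y) := by
  intro t ht ⟨hl, hr⟩
  have hsp := span_lr f h0 hN (y.1 0) (y.1 (Fin.last m.unop.len))
    (y.1.monotone (Fin.zero_le _)) y.2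
  refine hsp.2.2.2 t ht ⟨?_, ?_⟩
  · exact lt_of_le_of_lt (lift_lb f h0 hN y 0) hl
  · exact lt_of_lt_of_le hr (lift_ub f h0 hN y (Fin.last m.unop.len))

noncomputable def liftSx {m : SimplexCategoryᵒᵖ}
    (y : (Necklace (NN f h0 hN) (JJ f h0 hN)).obj m) : (Necklace N J).obj m :=
  ⟨liftOH f h0 hN y, lift_cond f h0 hN y⟩

lemma pmap_liftSx {m : SimplexCategoryᵒᵖ}
    (y : (Necklace (NN f h0 hN) (JJ f h0 hN)).obj m) :
    (pmap f h0 hN).app m (liftSx f h0 hN y) = y := by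
  apply Subtype.ext
  apply OrderHom.ext
  funext i
  exact pi_lift f h0 hN y i

lemma pmap_surj : LevelSurj (pmap f h0 hN) :=
  fun m y => ⟨liftSx f h0 hN y, pmap_liftSx f h0 hN y⟩

noncomputable def gmap : Necklace (NN f h0 hN) (JJ f h0 hN) ⟶ S where
  app m := TypeCat.ofHom fun y => f.app m (liftSx f h0 hN y)
  naturality m m' φ := by
    ext y
    dsimp only [types_comp_apply]
    show f.app m' (liftSx f h0 hN ((Necklace (NN f h0 hN) (JJ f h0 hN)).map φ y)) =
      S.map φ (f.app m (liftSx f h0 hN y))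
    have h1 : f.app m' ((Necklace N J).map φ (liftSx f h0 hN y)) =
        S.map φ (f.app m (liftSx f h0 hN y)) := ConcreteCategory.congr_hom (f.naturality φ) _
    rw [← h1]
    apply coeq f h0 hN
    intro i
    have l1 : pi f h0 hN ((liftSx f h0 hN
        ((Necklace (NN f h0 hN) (JJ f h0 hN)).map φ y)).1 i) =
        ((Necklace (NN f h0 hN) (JJ f h0 hN)).map φ y).1 i :=
      pi_lift f h0 hN _ i
    have l2 : pi f h0 hN (((Necklace N J).map φ (liftSx f h0 hN y)).1 i) =
        pi f h0 hN ((liftSx f h0 hN y).1 (φ.unop.toOrderHom i)) := rfl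
    have l3 : pi f h0 hN ((liftSx f h0 hN y).1 (φ.unop.toOrderHom i)) =
        y.1 (φ.unop.toOrderHom i) := pi_lift f h0 hN y _
    rw [l1, l2, l3]
    rfl

lemma pg : pmap f h0 hN ≫ gmap f h0 hN = f := by
  apply NatTrans.ext
  funext m; ext x
  show f.app m (liftSx f h0 hN ((pmap f h0 hN).app m x)) = f.app m x
  apply coeq f h0 hN
  intro i
  have l1 : pi f h0 hN ((liftSx f h0 hN ((pmap f h0 hN).app m x)).1 i) =
      ((pmap f h0 hN).app m x).1 i := pi_lift f h0 hN _ i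
  rw [l1]
  rfl

lemma pmap_vtx0 : (pmap f h0 hN).app (Opposite.op ⦋0⦌) (vtx J 0) =
    vtx (JJ f h0 hN) 0 := by
  apply Subtype.ext
  apply OrderHom.ext
  funext i
  exact pi_zero f h0 hN

lemma pmap_vtxlast : (pmap f h0 hN).app (Opposite.op ⦋0⦌) (vtx J (Fin.last N)) =
    vtx (JJ f h0 hN) (Fin.last (NN f h0 hN)) := by
  apply Subtype.ext
  apply OrderHom.ext
  funext i
  exact Fin.ext (pi_last f h0 hN)

lemma nondeg_reindex {k mm : ℕ} (hkm : k = mm) (w : (⦋k⦌ : SimplexCategory) ⟶ ⦋mm⦌)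
    (hw : ∀ i : Fin (k+1), ((w.toOrderHom i) : ℕ) = i.val) (z : S _⦋mm⦌)
    (hz : IsNondeg z) : IsNondeg (S.map w.op z) := by
  subst hkm
  intro m₂ σ₂ yy hσ₂ heq
  have hwid : w = 𝟙 _ := by
    apply SimplexCategory.Hom.ext
    apply OrderHom.ext
    funext x
    apply Fin.ext
    rw [hw x, SimplexCategory.id_toOrderHom]
    rfl
  rw [hwid, map_id_apply] at heq
  exact hz m₂ σ₂ yy hσ₂ heq

lemma gmap_tnd : TotallyNondeg (gmap f h0 hN) := by
  intro jc jc' hjc hjc' hlt hcons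
  set y : (Necklace (NN f h0 hN) (JJ f h0 hN)).obj (Opposite.op ⦋jc'.val - jc.val⦌) :=
    bead (JJ f h0 hN) jc jc' hlt.le hcons with hy
  show IsNondeg (f.app _ (liftSx f h0 hN y))
  have hltv : jc.val ≤ jc'.val := hlt.le
  have hy0 : y.1 0 = jc := Fin.ext (by
    show jc.val + (0 : Fin (jc'.val - jc.val + 1)).val = jc.val
    simp)
  have hyl : y.1 (Fin.last
      (Opposite.unop (Opposite.op (⦋jc'.val - jc.val⦌ : SimplexCategory))).len) = jc' :=
    Fin.ext (by
      show jc.val + (Fin.last (jc'.val - jc.val)).val = jc'.val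
      simp only [Fin.val_last]
      omega)
  have hsp := span_lr f h0 hN (y.1 0) (y.1 (Fin.last _))
    (y.1.monotone (Fin.zero_le _)) y.2
  have hpj : pi f h0 hN (lj f h0 hN (y.1 0)) = y.1 0 :=
    pi_lj f h0 hN _ (by rw [hy0]; exact hjc)
  have hpj' : pi f h0 hN (rj f h0 hN (y.1 0) (y.1 (Fin.last
      (Opposite.unop (Opposite.op (⦋jc'.val - jc.val⦌ : SimplexCategory))).len))) =
      y.1 (Fin.last
        (Opposite.unop (Opposite.op (⦋jc'.val - jc.val⦌ : SimplexCategory))).len) :=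
    pi_rj f h0 hN _ _ (by rw [hyl]; exact hjc') (y.1.monotone (Fin.zero_le _))
  have hml := pi_span_last f h0 hN hsp
  have hkm : jc'.val - jc.val =
      msp f (lj f h0 hN (y.1 0)) (rj f h0 hN (y.1 0) (y.1 (Fin.last _))) := by
    have e0 : (y.1 0).val = jc.val := congrArg Fin.val hy0
    have el : (y.1 (Fin.last
        (Opposite.unop (Opposite.op (⦋jc'.val - jc.val⦌ : SimplexCategory))).len)).val =
        jc'.val := congrArg Fin.val hyl
    have e1 : (pi f h0 hN (lj f h0 hN (y.1 0))).val = (y.1 0).val := congrArg Fin.val hpj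
    have e2 : (pi f h0 hN (rj f h0 hN (y.1 0) (y.1 (Fin.last _)))).val =
        (y.1 (Fin.last _)).val := congrArg Fin.val hpj'
    -- the values of pi at the new joints differ by exactly jc' - jc... but pi of NEW? no:
    -- these are values in Fin (NN+1); (y.1 0).val = jc.val etc.
    omega
  rw [f_formula f (liftSx f h0 hN y) hsp (lift_lb f h0 hN y 0)
    (lift_ub f h0 hN y (Fin.last _))]
  apply nondeg_reindex hkm
  · intro i
    rw [whom_val f h0 hN (liftSx f h0 hN y) hsp (lift_lb f h0 hN y 0)
      (lift_ub f h0 hN y (Fin.last _)) i]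
    have l1 : pi f h0 hN ((liftSx f h0 hN y).1 i) = y.1 i := pi_lift f h0 hN y i
    rw [l1]
    have e0 : (y.1 0).val = jc.val := congrArg Fin.val hy0
    have e1 : (pi f h0 hN (lj f h0 hN (y.1 0))).val = (y.1 0).val := congrArg Fin.val hpj
    have e2 : (y.1 i).val = jc.val + i.val := rfl
    omega
  · exact zsp_nondeg f _ _

end lifting


section nvlemmas

set_option maxHeartbeats 1000000

variable {N N₂ : ℕ} {J : Finset (Fin (N + 1))} {J₂ : Finset (Fin (N₂ + 1))}

/-- The edge simplex of a necklace. -/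
def edgeSx (J : Finset (Fin (N + 1))) (u : Fin N) : (Necklace N J).obj (Opposite.op ⦋1⦌) :=
  ⟨⟨fun i => if i.val = 0 then u.castSucc else u.succ, by
    intro i i' h
    by_cases h1 : i.val = 0
    · by_cases h2 : i'.val = 0
      · simp [h1, h2]
      · simp only [h1, h2, if_true, if_false, reduceIte]
        exact le_of_lt (Fin.castSucc_lt_succ (i := u))
    · have h2 : i'.val ≠ 0 := by
        have := Fin.le_def.1 h
        omega
      simp [h1, h2]⟩, by
    intro t ht hcon
    have hl : u.castSucc < t := hcon.1
    have hr : t < u.succ := hcon.2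
    have hl' := Fin.lt_def.1 hl
    have hr' := Fin.lt_def.1 hr
    simp only [Fin.coe_castSucc, Fin.val_succ] at hl' hr'
    omega⟩

lemma nv_step (p₂ : Necklace N J ⟶ Necklace N₂ J₂) (u : Fin N) :
    nvmap p₂ u.castSucc ≤ nvmap p₂ u.succ := by
  have h := ((p₂.app (Opposite.op ⦋1⦌) (edgeSx J u)).1).monotone
    (show (0 : Fin ((Opposite.unop (Opposite.op (⦋1⦌ : SimplexCategory))).len + 1)) ≤
      Fin.last _ from Fin.zero_le _)
  rw [napp_apply, napp_apply] at h
  have e0 : (edgeSx J u).1 (0 : Fin ((Opposite.unop (Opposite.op (⦋1⦌ :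
      SimplexCategory))).len + 1)) = u.castSucc := rfl
  have e1 : (edgeSx J u).1 (Fin.last (Opposite.unop (Opposite.op (⦋1⦌ :
      SimplexCategory))).len) = u.succ := rfl
  rwa [e0, e1] at h

lemma nv_mono (p₂ : Necklace N J ⟶ Necklace N₂ J₂) : Monotone (nvmap p₂) := by
  suffices h : ∀ (k : ℕ) (v w : Fin (N+1)), v ≤ w → w.val - v.val = k →
      nvmap p₂ v ≤ nvmap p₂ w by
    intro v w hvw
    exact h (w.val - v.val) v w hvw rfl
  intro k
  induction k with
  | zero =>
    intro v w hvw hk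
    have : v = w := Fin.ext (by have := Fin.le_def.1 hvw; omega)
    rw [this]
  | succ k IH =>
    intro v w hvw hk
    have hw1 : 1 ≤ w.val := by omega
    have hwN : w.val - 1 < N := by have := w.isLt; omega
    set u : Fin N := ⟨w.val - 1, hwN⟩ with hu
    have hsucc : u.succ = w := Fin.ext (by simp [hu]; omega)
    have hvc : v ≤ u.castSucc := by
      rw [Fin.le_def]
      have := Fin.le_def.1 hvw
      show v.val ≤ w.val - 1
      omega
    have h1 := IH v u.castSucc hvc (by
      show u.val - v.val = k
      have : u.val = w.val - 1 := rfl
      omega)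
    have h2 := nv_step p₂ u
    rw [hsucc] at h2
    exact le_trans h1 h2

lemma nv_surj (p₂ : Necklace N J ⟶ Necklace N₂ J₂) (hs : LevelSurj p₂) :
    Function.Surjective (nvmap p₂) := by
  intro v₂
  obtain ⟨x, hx⟩ := hs (Opposite.op ⦋0⦌) (vtx J₂ v₂)
  refine ⟨x.1 0, ?_⟩
  have h2 := napp_apply p₂ x (0 : Fin ((Opposite.unop (Opposite.op (⦋0⦌ :
    SimplexCategory))).len + 1))
  have h3 : ((p₂.app (Opposite.op ⦋0⦌) x).1 :
      Fin ((Opposite.unop (Opposite.op (⦋0⦌ : SimplexCategory))).len + 1) →o Fin (N₂+1)) 0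
      = v₂ := by rw [hx]; rfl
  rw [h2] at h3
  exact h3

lemma nv_lt_of_lt (p₂ : Necklace N J ⟶ Necklace N₂ J₂) {v w : Fin (N+1)}
    (h : nvmap p₂ v < nvmap p₂ w) : v < w := by
  by_contra hc
  push_neg at hc
  exact absurd (nv_mono p₂ hc) (not_le.2 h)

/-- intermediate value property for surjective monotone maps of Fin. -/
lemma fin_ivt {n m : ℕ} (φ : Fin (n+1) →o Fin (m+1)) (hφ : Function.Surjective φ)
    {j j' : Fin (n+1)} (hjj : j ≤ j') (c : Fin (m+1)) (h1 : φ j ≤ c) (h2 : c ≤ φ j') :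
    ∃ v : Fin (n+1), j ≤ v ∧ v ≤ j' ∧ φ v = c := by
  classical
  set T : Finset (Fin (n+1)) := Finset.filter (fun v => j ≤ v ∧ c ≤ φ v) Finset.univ with hT
  have hne : T.Nonempty := ⟨j', by simp [hT, hjj, h2]⟩
  set v := T.min' hne with hv
  have hvmem : j ≤ v ∧ c ≤ φ v := by
    have := T.min'_mem hne
    simp only [hT, Finset.mem_filter, Finset.mem_univ, true_and] at this
    exact this
  have hvj' : v ≤ j' := T.min'_le _ (by simp [hT, hjj, h2])
  refine ⟨v, hvmem.1, hvj', ?_⟩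
  rcases eq_or_lt_of_le hvmem.1 with heq | hlt
  · exact le_antisymm (heq ▸ h1) hvmem.2
  · have hv1 : 1 ≤ v.val := by
      have := Fin.lt_def.1 hlt
      omega
    have hvN : v.val - 1 < n := by have := v.isLt; omega
    set u : Fin n := ⟨v.val - 1, hvN⟩ with hu
    have hsucc : u.succ = v := Fin.ext (by simp [hu]; omega)
    have hcu : j ≤ u.castSucc := by
      rw [Fin.le_def]
      show j.val ≤ v.val - 1
      have := Fin.lt_def.1 hlt
      omega
    have hnotmem : ¬ (c ≤ φ u.castSucc) := by
      intro hcon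
      have hmem : u.castSucc ∈ T := by simp [hT, hcu, hcon]
      have := T.min'_le _ hmem
      rw [← hv] at this
      have hlt2 : u.castSucc < v := by
        rw [Fin.lt_def]
        show v.val - 1 < v.val
        omega
      exact absurd this (not_le.2 hlt2)
    push_neg at hnotmem
    have hstep := surj_step φ hφ u
    rw [hsucc] at hstep
    apply le_antisymm _ hvmem.2
    rw [Fin.le_def]
    have l1 := Fin.lt_def.1 hnotmem
    omega

end nvlemmas


section uniqueness

set_option maxHeartbeats 1000000

variable {S : SSet} {N : ℕ} {J : Finset (Fin (N + 1))}
variable (f : Necklace N J ⟶ S) (h0 : (0 : Fin (N+1)) ∈ J) (hN : Fin.last N ∈ J)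
variable {N₂ : ℕ} {J₂ : Finset (Fin (N₂ + 1))}

lemma heq_hom_val {d m m' : ℕ} (hmm : m = m') {φ : (⦋d⦌ : SimplexCategory) ⟶ ⦋m⦌}
    {ψ : (⦋d⦌ : SimplexCategory) ⟶ ⦋m'⦌} (h : HEq φ ψ) (r : Fin (d+1)) :
    ((φ.toOrderHom r) : ℕ) = (ψ.toOrderHom r).val := by
  subst hmm
  rw [eq_of_heq h]

lemma nv_zero (p₂ : Necklace N J ⟶ Necklace N₂ J₂)
    (hv0 : p₂.app (Opposite.op ⦋0⦌) (vtx J 0) = vtx J₂ 0) : nvmap p₂ 0 = 0 :=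
  vtx_inj ((app_vtx p₂ 0).symm.trans hv0)

lemma nv_llast (p₂ : Necklace N J ⟶ Necklace N₂ J₂)
    (hvl : p₂.app (Opposite.op ⦋0⦌) (vtx J (Fin.last N)) = vtx J₂ (Fin.last N₂)) :
    nvmap p₂ (Fin.last N) = Fin.last N₂ :=
  vtx_inj ((app_vtx p₂ (Fin.last N)).symm.trans hvl)

lemma bead_vtx {j j' : Fin (N+1)} (hle : j ≤ j') (hcons : ∀ t ∈ J, ¬(j < t ∧ t < j'))
    (r : Fin ((Opposite.unop (Opposite.op (⦋j'.val - j.val⦌ : SimplexCategory))).len + 1)) :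
    (((bead J j j' hle hcons).1 :
      Fin ((Opposite.unop (Opposite.op (⦋j'.val - j.val⦌ : SimplexCategory))).len + 1) →o
      Fin (N+1)) r).val = j.val + r.val := rfl

lemma nvJ_mem (p₂ : Necklace N J ⟶ Necklace N₂ J₂) (hsurj : LevelSurj p₂)
    (h0₂ : (0 : Fin (N₂+1)) ∈ J₂) (hN₂ : Fin.last N₂ ∈ J₂) {t : Fin (N+1)} (ht : t ∈ J) :
    nvmap p₂ t ∈ J₂ := by
  by_contra h
  set c := jb h0₂ (nvmap p₂ t) with hc
  set c' := ja hN₂ (nvmap p₂ t) with hc'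
  have hsp₂ : IsSpan J₂ c c' := span_of h0₂ hN₂ (le_refl (nvmap p₂ t))
    (fun s _ hs => absurd (hs.1.trans hs.2) (lt_irrefl _))
  have hclt : c < nvmap p₂ t := by
    rcases eq_or_lt_of_le (jb_le h0₂ (nvmap p₂ t)) with heq | hlt
    · exact absurd (heq ▸ jb_mem h0₂ (nvmap p₂ t)) h
    · exact hlt
  have hc'gt : nvmap p₂ t < c' := by
    rcases eq_or_lt_of_le (le_ja hN₂ (nvmap p₂ t)) with heq | hlt
    · exact absurd (heq ▸ ja_mem hN₂ (nvmap p₂ t)) h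
    · exact hlt
  obtain ⟨x, hx⟩ := hsurj (Opposite.op ⦋c'.val - c.val⦌) (bead J₂ c c' hsp₂.2.2.1 hsp₂.2.2.2)
  have h0v : nvmap p₂ (x.1 0) = c := by
    have := napp_apply p₂ x (0 : Fin ((Opposite.unop (Opposite.op
      (⦋c'.val - c.val⦌ : SimplexCategory))).len + 1))
    rw [hx] at this
    apply Fin.ext
    rw [← this]
    exact (bead_vtx hsp₂.2.2.1 hsp₂.2.2.2 0).trans (by simp)
  have hlv : nvmap p₂ (x.1 (Fin.last _)) = c' := by
    have := napp_apply p₂ x (Fin.last ((Opposite.unop (Opposite.op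
      (⦋c'.val - c.val⦌ : SimplexCategory))).len))
    rw [hx] at this
    apply Fin.ext
    rw [← this]
    rw [bead_vtx hsp₂.2.2.1 hsp₂.2.2.2]
    have : c.val ≤ c'.val := hsp₂.2.2.1
    simp only [Fin.val_last, SimplexCategory.len_mk, Opposite.unop_op]
    omega
  refine x.2 t ht ⟨?_, ?_⟩
  · refine nv_lt_of_lt p₂ ?_
    rw [h0v]
    exact hclt
  · refine nv_lt_of_lt p₂ ?_
    rw [hlv]
    exact hc'gt

include h0 hN in
lemma J₂_mem_image (p₂ : Necklace N J ⟶ Necklace N₂ J₂) (hsurj : LevelSurj p₂)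
    {t₂ : Fin (N₂+1)} (ht₂ : t₂ ∈ J₂) : ∃ t ∈ J, nvmap p₂ t = t₂ := by
  by_contra h
  push_neg at h
  obtain ⟨v, hv⟩ := nv_surj p₂ hsurj t₂
  set j := jb h0 v with hj
  set j' := ja hN v with hj'
  have hsp : IsSpan J j j' := span_of h0 hN (le_refl v)
    (fun s _ hs => absurd (hs.1.trans hs.2) (lt_irrefl _))
  have hjl : nvmap p₂ j < t₂ := by
    rcases eq_or_lt_of_le (hv ▸ nv_mono p₂ (jb_le h0 v)) with heq | hlt
    · exact absurd heq (h j (jb_mem h0 v))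
    · exact hlt
  have hjr : t₂ < nvmap p₂ j' := by
    rcases eq_or_lt_of_le (hv ▸ nv_mono p₂ (le_ja hN v)) with heq | hlt
    · exact absurd heq.symm (h j' (ja_mem hN v))
    · exact hlt
  set a₂ := p₂.app (Opposite.op ⦋j'.val - j.val⦌) (bead J j j' hsp.2.2.1 hsp.2.2.2) with ha₂
  refine a₂.2 t₂ ht₂ ⟨?_, ?_⟩
  · have := napp_apply p₂ (bead J j j' hsp.2.2.1 hsp.2.2.2)
      (0 : Fin ((Opposite.unop (Opposite.op (⦋j'.val - j.val⦌ : SimplexCategory))).len + 1))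
    rw [← ha₂] at this
    rw [this]
    have hb : ((bead J j j' hsp.2.2.1 hsp.2.2.2).1 (0 : Fin ((Opposite.unop (Opposite.op
        (⦋j'.val - j.val⦌ : SimplexCategory))).len + 1))) = j :=
      Fin.ext ((bead_vtx hsp.2.2.1 hsp.2.2.2 0).trans (by simp))
    rw [hb]
    exact hjl
  · have := napp_apply p₂ (bead J j j' hsp.2.2.1 hsp.2.2.2)
      (Fin.last ((Opposite.unop (Opposite.op (⦋j'.val - j.val⦌ : SimplexCategory))).len))
    rw [← ha₂] at this
    rw [this]
    have hb : ((bead J j j' hsp.2.2.1 hsp.2.2.2).1 (Fin.last ((Opposite.unop (Opposite.op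
        (⦋j'.val - j.val⦌ : SimplexCategory))).len))) = j' := by
      apply Fin.ext
      rw [bead_vtx hsp.2.2.1 hsp.2.2.2]
      have : j.val ≤ j'.val := hsp.2.2.1
      simp only [Fin.val_last, SimplexCategory.len_mk, Opposite.unop_op]
      omega
    rw [hb]
    exact hjr

include h0 hN in
lemma span_compare (p₂ : Necklace N J ⟶ Necklace N₂ J₂) (g₂ : Necklace N₂ J₂ ⟶ S)
    (hpg : p₂ ≫ g₂ = f) (htnd : TotallyNondeg g₂) (hsurj : LevelSurj p₂)
    (h0₂ : (0 : Fin (N₂+1)) ∈ J₂) (hN₂ : Fin.last N₂ ∈ J₂)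
    {j j' : Fin (N+1)} (hsp : IsSpan J j j') :
    (nvmap p₂ j').val - (nvmap p₂ j).val = msp f j j' ∧
    ∀ r : Fin ((Opposite.unop (Opposite.op (⦋j'.val - j.val⦌ : SimplexCategory))).len + 1),
      (nvmap p₂ ((bead J j j' hsp.2.2.1 hsp.2.2.2).1 r)).val =
        (nvmap p₂ j).val + ((ssp f j j').toOrderHom r).val := by
  set c := nvmap p₂ j with hc
  set c' := nvmap p₂ j' with hc'
  have hsp₂ : IsSpan J₂ c c' := by
    refine ⟨nvJ_mem p₂ hsurj h0₂ hN₂ hsp.1, nvJ_mem p₂ hsurj h0₂ hN₂ hsp.2.1,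
      nv_mono p₂ hsp.2.2.1, ?_⟩
    intro t₂ ht₂ ⟨hl, hr⟩
    obtain ⟨t, htJ, rfl⟩ := J₂_mem_image h0 hN p₂ hsurj ht₂
    exact hsp.2.2.2 t htJ ⟨nv_lt_of_lt p₂ hl, nv_lt_of_lt p₂ hr⟩
  set B := bead J j j' hsp.2.2.1 hsp.2.2.2 with hB
  set a₂ := p₂.app (Opposite.op ⦋j'.val - j.val⦌) B with ha₂
  have hnb : ∀ r, (a₂.1 r).val = (nvmap p₂ (B.1 r)).val := by
    intro r
    have := napp_apply p₂ B r
    rw [← ha₂] at this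
    rw [this]
  have hb0 : B.1 (0 : Fin ((Opposite.unop (Opposite.op (⦋j'.val - j.val⦌ :
      SimplexCategory))).len + 1)) = j :=
    Fin.ext ((bead_vtx hsp.2.2.1 hsp.2.2.2 0).trans (by simp))
  have hbl : B.1 (Fin.last ((Opposite.unop (Opposite.op (⦋j'.val - j.val⦌ :
      SimplexCategory))).len)) = j' := by
    apply Fin.ext
    rw [bead_vtx hsp.2.2.1 hsp.2.2.2]
    have : j.val ≤ j'.val := hsp.2.2.1
    simp only [Fin.val_last, SimplexCategory.len_mk, Opposite.unop_op]
    omega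
  have hj : c ≤ a₂.1 0 := by
    rw [Fin.le_def, hnb 0, hb0]
  have hj' : a₂.1 (Fin.last _) ≤ c' := by
    rw [Fin.le_def, hnb (Fin.last _), hbl]
  have hform := bead_formula g₂ a₂ c c' hsp₂ hj hj'
  have hfb : g₂.app (Opposite.op ⦋j'.val - j.val⦌) a₂ = f.app _ B := by
    rw [ha₂]
    exact congrFun (congrArg (fun n => n.app (Opposite.op ⦋j'.val - j.val⦌)) hpg) B
  have hxz : f.app (Opposite.op ⦋j'.val - j.val⦌) B =
      S.map (ssp f j j').op (zsp f j j') := by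
    rw [hB, ← xsp_of_span f hsp]
    exact xsp_eq f j j'
  have hmain : S.map (ssp f j j').op (zsp f j j') =
      S.map (relHom a₂ c c' hj hj').op
        (g₂.app _ (bead J₂ c c' hsp₂.2.2.1 hsp₂.2.2.2)) := by
    rw [← hxz, ← hfb, hform]
  -- nondegeneracy of the target bead image
  have hWnd : IsNondeg (g₂.app (Opposite.op ⦋c'.val - c.val⦌)
      (bead J₂ c c' hsp₂.2.2.1 hsp₂.2.2.2)) := by
    rcases eq_or_lt_of_le hsp₂.2.2.1 with heq | hlt
    · intro mm σ yy hσ hy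
      have : c.val = c'.val := congrArg Fin.val heq
      omega
    · exact htnd c c' hsp₂.1 hsp₂.2.1 hlt hsp₂.2.2.2
  -- surjectivity of relHom
  have hrel_surj : Function.Surjective (relHom a₂ c c' hj hj').toOrderHom := by
    intro t
    have htle : t.val ≤ c'.val - c.val := Nat.lt_succ_iff.1 t.isLt
    have hcc' : c.val ≤ c'.val := hsp₂.2.2.1
    set tgt : Fin (N₂+1) := ⟨c.val + t.val, by have := c'.isLt; omega⟩ with htgt
    obtain ⟨v, hjv, hvj', hnv⟩ := fin_ivt ⟨nvmap p₂, nv_mono p₂⟩ (nv_surj p₂ hsurj)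
      hsp.2.2.1 tgt (by rw [Fin.le_def]; show c.val ≤ c.val + t.val; omega)
      (by rw [Fin.le_def]; show c.val + t.val ≤ c'.val; omega)
    have hjvv : j.val ≤ v.val := hjv
    have hvjv : v.val ≤ j'.val := hvj'
    refine ⟨⟨v.val - j.val, by simp only [SimplexCategory.len_mk]; omega⟩, ?_⟩
    apply Fin.ext
    show (a₂.1 ⟨v.val - j.val, _⟩).val - c.val = t.val
    rw [hnb]
    have hbv : B.1 ⟨v.val - j.val, by simp only [SimplexCategory.len_mk]; omega⟩ = v := by
      apply Fin.ext
      rw [bead_vtx hsp.2.2.1 hsp.2.2.2]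
      show j.val + (v.val - j.val) = v.val
      omega
    rw [hbv]
    have : (nvmap p₂ v).val = c.val + t.val := congrArg Fin.val hnv
    omega
  obtain ⟨hm, hheq, -⟩ := ez_unique (ssp f j j') (relHom a₂ c c' hj hj')
    (zsp f j j') (g₂.app _ (bead J₂ c c' hsp₂.2.2.1 hsp₂.2.2.2))
    (ssp_surj f j j') hrel_surj (zsp_nondeg f j j') hWnd hmain
  constructor
  · exact hm
  · intro r
    have h1 : (((relHom a₂ c c' hj hj').toOrderHom r) : ℕ) =
        ((ssp f j j').toOrderHom r).val := heq_hom_val hm hheq r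
    have h2 : (((relHom a₂ c c' hj hj').toOrderHom r) : ℕ) = (a₂.1 r).val - c.val := rfl
    have h3 := hnb r
    have h4 : c.val ≤ (nvmap p₂ (B.1 r)).val := by
      have hle : j ≤ B.1 r := by
        rw [Fin.le_def, bead_vtx hsp.2.2.1 hsp.2.2.2]
        omega
      exact nv_mono p₂ hle
    omega

lemma nv_eq_pi (p₂ : Necklace N J ⟶ Necklace N₂ J₂) (g₂ : Necklace N₂ J₂ ⟶ S)
    (hpg : p₂ ≫ g₂ = f) (htnd : TotallyNondeg g₂) (hsurj : LevelSurj p₂)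
    (h0₂ : (0 : Fin (N₂+1)) ∈ J₂) (hN₂ : Fin.last N₂ ∈ J₂)
    (hv0 : p₂.app (Opposite.op ⦋0⦌) (vtx J 0) = vtx J₂ 0) :
    ∀ v : Fin (N+1), (nvmap p₂ v).val = (pi f h0 hN v).val := by
  suffices h : ∀ (k : ℕ) (v : Fin (N+1)), v.val = k →
      (nvmap p₂ v).val = (pi f h0 hN v).val by
    intro v
    exact h v.val v rfl
  intro k
  induction k with
  | zero =>
    intro v hv
    have : v = 0 := Fin.ext hv
    rw [this, nv_zero p₂ hv0, pi_zero]
    rfl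
  | succ k IH =>
    intro v hv
    have hkN : k < N := by have := v.isLt; omega
    set u : Fin N := ⟨k, hkN⟩ with hu
    have hsucc : u.succ = v := Fin.ext (by simp [hu]; omega)
    set j := jb h0 u.castSucc with hj
    set j' := ja hN u.succ with hj'
    have hsp : IsSpan J j j' := span_of h0 hN (le_of_lt (Fin.castSucc_lt_succ (i := u)))
      (fun t _ ht => by
        have h1 := Fin.lt_def.1 ht.1
        have h2 := Fin.lt_def.1 ht.2
        simp only [Fin.coe_castSucc, Fin.val_succ] at h1 h2
        omega)
    have hj1 : j ≤ u.castSucc := jb_le h0 _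
    have hj2 : u.succ ≤ j' := le_ja hN _
    have hj1v : j.val ≤ u.val := hj1
    have hj2v : u.val + 1 ≤ j'.val := hj2
    have hcomp := span_compare f h0 hN p₂ g₂ hpg htnd hsurj h0₂ hN₂ hsp
    set B := bead J j j' hsp.2.2.1 hsp.2.2.2 with hB
    set r1 : Fin ((Opposite.unop (Opposite.op (⦋j'.val - j.val⦌ :
        SimplexCategory))).len + 1) := ⟨u.val - j.val, by
      simp only [Opposite.unop_op, SimplexCategory.len_mk]; omega⟩ with hr1
    set r2 : Fin ((Opposite.unop (Opposite.op (⦋j'.val - j.val⦌ :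
        SimplexCategory))).len + 1) := ⟨u.val + 1 - j.val, by
      simp only [Opposite.unop_op, SimplexCategory.len_mk]; omega⟩ with hr2
    have hbr1 : B.1 r1 = u.castSucc := Fin.ext (by
      rw [hB, bead_vtx hsp.2.2.1 hsp.2.2.2]
      show j.val + (u.val - j.val) = (u.castSucc : Fin (N+1)).val
      have hcs : (u.castSucc : Fin (N+1)).val = u.val := Fin.coe_castSucc u
      omega)
    have hbr2 : B.1 r2 = u.succ := Fin.ext (by
      rw [hB, bead_vtx hsp.2.2.1 hsp.2.2.2]
      show j.val + (u.val + 1 - j.val) = (u.succ : Fin (N+1)).val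
      have hss : (u.succ : Fin (N+1)).val = u.val + 1 := Fin.val_succ u
      omega)
    have hc1 := hcomp.2 r1
    have hc2 := hcomp.2 r2
    rw [hbr1] at hc1
    rw [hbr2] at hc2
    -- pi versions
    have hp1 := pi_span f h0 hN hsp u.castSucc hj1
      (le_trans (le_of_lt (Fin.castSucc_lt_succ (i := u))) hj2)
    have hp2 := pi_span f h0 hN hsp u.succ (le_trans hj1 (le_of_lt (Fin.castSucc_lt_succ (i := u))))
      hj2
    have harg1 : (⟨min ((u.castSucc : Fin (N+1)).val - j.val) (j'.val - j.val),
        Nat.lt_succ_of_le (min_le_right _ _)⟩ : Fin (j'.val - j.val + 1)) = r1 :=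
      Fin.ext (by
        show min ((u.castSucc : Fin (N+1)).val - j.val) (j'.val - j.val) = u.val - j.val
        have hcs : (u.castSucc : Fin (N+1)).val = u.val := Fin.coe_castSucc u
        omega)
    have hsv1 : sv f j j' ((u.castSucc : Fin (N+1)).val - j.val) =
        ((ssp f j j').toOrderHom r1).val := by
      rw [sv, harg1]
    have harg2 : (⟨min ((u.succ : Fin (N+1)).val - j.val) (j'.val - j.val),
        Nat.lt_succ_of_le (min_le_right _ _)⟩ : Fin (j'.val - j.val + 1)) = r2 :=
      Fin.ext (by
        show min ((u.succ : Fin (N+1)).val - j.val) (j'.val - j.val) = u.val + 1 - j.val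
        have hss : (u.succ : Fin (N+1)).val = u.val + 1 := Fin.val_succ u
        omega)
    have hsv2 : sv f j j' ((u.succ : Fin (N+1)).val - j.val) =
        ((ssp f j j').toOrderHom r2).val := by
      rw [sv, harg2]
    rw [hsv1] at hp1
    rw [hsv2] at hp2
    have hIH := IH u.castSucc (by simp [hu])
    rw [← hsucc]
    omega

end uniqueness

set_option maxHeartbeats 1000000 in
theorem stmt14 :
    (∀ (X : SSet) (n : ℕ) (z : X _⦋n⦌), IsDegenerate z →
      ∃ (m : ℕ) (σ : (⦋n⦌ : SimplexCategory) ⟶ ⦋m⦌) (z' : X _⦋m⦌),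
        Function.Surjective σ.toOrderHom ∧ IsNondeg z' ∧ z = X.map σ.op z' ∧
        ∀ (m₂ : ℕ) (σ₂ : (⦋n⦌ : SimplexCategory) ⟶ ⦋m₂⦌) (z₂ : X _⦋m₂⦌),
          Function.Surjective σ₂.toOrderHom → IsNondeg z₂ → z = X.map σ₂.op z₂ →
          m₂ = m ∧ HEq σ₂ σ ∧ HEq z₂ z') ∧
    (∀ (S : SSet) (N : ℕ) (J : Finset (Fin (N + 1)))
      (_ : (0 : Fin (N + 1)) ∈ J) (_ : Fin.last N ∈ J) (f : Necklace N J ⟶ S),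
      ∃ (N' : ℕ) (J' : Finset (Fin (N' + 1)))
        (_ : (0 : Fin (N' + 1)) ∈ J') (_ : Fin.last N' ∈ J')
        (g : Necklace N' J' ⟶ S) (p : Necklace N J ⟶ Necklace N' J'),
        TotallyNondeg g ∧ LevelSurj p ∧
        p.app _ (vtx J 0) = vtx J' 0 ∧
        p.app _ (vtx J (Fin.last N)) = vtx J' (Fin.last N') ∧
        p ≫ g = f ∧
        ∀ (N₂ : ℕ) (J₂ : Finset (Fin (N₂ + 1)))
          (_ : (0 : Fin (N₂ + 1)) ∈ J₂) (_ : Fin.last N₂ ∈ J₂)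
          (g₂ : Necklace N₂ J₂ ⟶ S) (p₂ : Necklace N J ⟶ Necklace N₂ J₂),
          TotallyNondeg g₂ → LevelSurj p₂ →
          p₂.app _ (vtx J 0) = vtx J₂ 0 →
          p₂.app _ (vtx J (Fin.last N)) = vtx J₂ (Fin.last N₂) →
          p₂ ≫ g₂ = f →
          ∃ e : Necklace N' J' ≅ Necklace N₂ J₂,
            e.hom ≫ g₂ = g ∧ p ≫ e.hom = p₂) := by
  constructor
  · intro X n z _hz
    obtain ⟨m, σ, z', hσ, hz', heq⟩ := ez_exists n z
    refine ⟨m, σ, z', hσ, hz', heq, ?_⟩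
    intro m₂ σ₂ z₂ hσ₂ hz₂ heq₂
    obtain ⟨h1, h2, h3⟩ := ez_unique σ σ₂ z' z₂ hσ hσ₂ hz' hz₂ (heq.symm.trans heq₂)
    exact ⟨h1, h2, h3⟩
  · intro S N J h0 hN f
    refine ⟨NN f h0 hN, JJ f h0 hN, JJ_zero f h0 hN, JJ_last f h0 hN, gmap f h0 hN,
      pmap f h0 hN, gmap_tnd f h0 hN, pmap_surj f h0 hN, pmap_vtx0 f h0 hN,
      pmap_vtxlast f h0 hN, pg f h0 hN, ?_⟩
    intro N₂ J₂ h0₂ hN₂ g₂ p₂ htnd hsurj hv0 hvl hpg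
    have hNP := nv_eq_pi f h0 hN p₂ g₂ hpg htnd hsurj h0₂ hN₂ hv0
    have hNN : N₂ = NN f h0 hN := by
      have h1 : (nvmap p₂ (Fin.last N)).val = N₂ := by
        rw [nv_llast p₂ hvl]
        rfl
      have h2 := hNP (Fin.last N)
      rw [pi_last] at h2
      omega
    subst hNN
    have hJJ : J₂ = JJ f h0 hN := by
      apply Finset.ext
      intro t
      constructor
      · intro ht
        obtain ⟨s, hs, hnv⟩ := J₂_mem_image h0 hN p₂ hsurj ht
        refine Finset.mem_image.2 ⟨s, hs, ?_⟩
        apply Fin.ext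
        rw [← congrArg Fin.val hnv]
        exact (hNP s).symm
      · intro ht
        obtain ⟨s, hs, hps⟩ := Finset.mem_image.1 ht
        have hmem := nvJ_mem p₂ hsurj h0₂ hN₂ hs
        have heqv : nvmap p₂ s = t := Fin.ext (by rw [hNP s, congrArg Fin.val hps])
        rwa [heqv] at hmem
    subst hJJ
    have hpp : pmap f h0 hN = p₂ := by
      apply NatTrans.ext
      funext m; ext x
      apply Subtype.ext
      apply OrderHom.ext
      funext i
      apply Fin.ext
      have h1 := napp_apply p₂ x i
      show (pi f h0 hN (x.1 i)).val =
        (((p₂.app m x).1 : Fin (m.unop.len + 1) →o Fin (NN f h0 hN + 1)) i).val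
      rw [h1]
      exact (hNP _).symm
    refine ⟨Iso.refl _, ?_, ?_⟩
    · rw [Iso.refl_hom, Category.id_comp]
      apply NatTrans.ext
      funext m; ext y
      calc g₂.app m y = g₂.app m ((pmap f h0 hN).app m (liftSx f h0 hN y)) := by
            rw [pmap_liftSx]
        _ = g₂.app m (p₂.app m (liftSx f h0 hN y)) := by rw [hpp]
        _ = f.app m (liftSx f h0 hN y) := congrFun (congrArg (fun n => n.app m) hpg) _
        _ = (gmap f h0 hN).app m y := rfl
    · rw [Iso.refl_hom, Category.comp_id]
      exact hpp



end Paper
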